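/- arXiv:2510.27160 — 8 statements merged into one kernel-verified Lean document; each statement's English description precedes it below -/
import Mathlib

section
/- Let V be a finite-dimensional real inner product space, S ⊆ V a nonempty closed convex set, and Δ ⊆ ℝ^n a nonempty compact set. Let f : V → ℝ be convex, subdifferentiable at every point of S, with ‖d‖ ≤ L_f for all x ∈ S and d ∈ ∂f(x). For every δ ∈ Δ let g(·;δ) : V → ℝ be convex, subdifferentiable at every point of S, with ‖d‖ ≤ L_g for all x ∈ S and d ∈ ∂_x g(x;δ); for every x ∈ S assume g(x;·) is continuous on Δ. Set G(x) := max_{δ∈Δ} g(x;δ) and L := max{L_f, L_g}, and suppose the set S* of minimizers of f over {x ∈ S : G(x) ≤ 0} is nonempty with optimal value f*. Fix ε > 0 and sequences (x_k) in S, (δ_k) in Δ and (d_k) in V such that for every k: if g(x_k;δ_k) ≤ ε then d_k ∈ ∂f(x_k), d_k ≠ 0, and x_{k+1} = P_S(x_k − (ε/‖d_k‖²) d_k); otherwise d_k ∈ ∂_x g(x_k;δ_k), d_k ≠ 0, and x_{k+1} = P_S(x_k − (g(x_k;δ_k)/‖d_k‖²) d_k). Then for every positive integer N with N ≥ L² ·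 dist(x_1, S*)² / ε², the set I_N := {k ∈ {1,…,N} : g(x_k;δ_k) ≤ ε} is nonempty, and for every k* ∈ I_N minimizing f(x_k) over k ∈ I_N one has f(x_{k*}) ≤ f* + ε and G(x_{k*}) ≤ ε + (G(x_{k*}) − g(x_{k*};δ_{k*})). -/
open Metric Set

lemma step_decrease {V : Type*} [NormedAddCommGroup V] [InnerProductSpace ℝ V]
    (u dd : V) (lam : ℝ) :
    ‖u - lam • dd‖ ^ 2 = ‖u‖ ^ 2 - 2 * lam * (inner ℝ dd u : ℝ) + lam ^ 2 * ‖dd‖ ^ 2 := by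
  have h1 : ‖lam • dd‖ ^ 2 = lam ^ 2 * ‖dd‖ ^ 2 := by
    rw [norm_smul, mul_pow, Real.norm_eq_abs, sq_abs]
  rw [norm_sub_sq_real, h1, real_inner_smul_right, real_inner_comm]
  ring

lemma proj_contract {V : Type*} [NormedAddCommGroup V] [InnerProductSpace ℝ V]
    {S : Set V} (hScv : Convex ℝ S) {p y z : V} (hp : p ∈ S) (hz : z ∈ S)
    (hmin : ∀ w ∈ S, ‖y - p‖ ≤ ‖y - w‖) : ‖p - z‖ ≤ ‖y - z‖ := by
  haveI : Nonempty S := ⟨⟨p, hp⟩⟩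
  have hinf : ‖y - p‖ = ⨅ w : S, ‖y - (w : V)‖ := by
    refine le_antisymm (le_ciInf fun w => hmin w w.2) ?_
    have hbdd : BddBelow (Set.range fun w : S => ‖y - (w : V)‖) :=
      ⟨0, by rintro _ ⟨w, rfl⟩; exact norm_nonneg _⟩
    exact ciInf_le hbdd ⟨p, hp⟩
  have hvar : (inner ℝ (y - p) (z - p) : ℝ) ≤ 0 :=
    (norm_eq_iInf_iff_real_inner_le_zero hScv hp).mp hinf z hz
  have hexp : ‖y - z‖ ^ 2 = ‖y - p‖ ^ 2 - 2 * (inner ℝ (y - p) (z - p) : ℝ) + ‖z - p‖ ^ 2 := by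
    have h : y - z = (y - p) - (z - p) := by abel
    rw [h, norm_sub_sq_real]
  have h2 : ‖p - z‖ ^ 2 ≤ ‖y - z‖ ^ 2 := by
    rw [norm_sub_rev p z]
    nlinarith [sq_nonneg ‖y - p‖]
  nlinarith [norm_nonneg (p - z), norm_nonneg (y - z)]

/-- The subdifferential of `f : V → ℝ` at `x`. -/
def subdiff {V : Type*} [NormedAddCommGroup V] [InnerProductSpace ℝ V]
    (f : V → ℝ) (x : V) : Set V :=
  {d | ∀ y, f x + (inner ℝ d (y - x) : ℝ) ≤ f y}

set_option maxHeartbeats 1000000 in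
theorem stmt0 {V : Type*} [NormedAddCommGroup V] [InnerProductSpace ℝ V]
    [FiniteDimensional ℝ V] {n : ℕ}
    -- the constraint set S
    (S : Set V) (hSne : S.Nonempty) (hScl : IsClosed S) (hScv : Convex ℝ S)
    -- the compact index set Δ
    (Δ : Set (EuclideanSpace ℝ (Fin n))) (hΔne : Δ.Nonempty) (hΔcp : IsCompact Δ)
    -- the objective f
    (f : V → ℝ) (hfcvx : ConvexOn ℝ Set.univ f)
    (Lf : ℝ) (hfsub : ∀ x ∈ S, (subdiff f x).Nonempty)
    (hLf : ∀ x ∈ S, ∀ d ∈ subdiff f x, ‖d‖ ≤ Lf)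
    -- the constraint functions g(·;δ)
    (g : V → EuclideanSpace ℝ (Fin n) → ℝ)
    (hgcvx : ∀ δ ∈ Δ, ConvexOn ℝ Set.univ fun x => g x δ)
    (Lg : ℝ) (hgsub : ∀ δ ∈ Δ, ∀ x ∈ S, (subdiff (fun z => g z δ) x).Nonempty)
    (hLg : ∀ δ ∈ Δ, ∀ x ∈ S, ∀ d ∈ subdiff (fun z => g z δ) x, ‖d‖ ≤ Lg)
    (hgcont : ∀ x ∈ S, ContinuousOn (g x) Δ)
    -- G and L
    (G : V → ℝ) (hG : ∀ x, G x = sSup (g x '' Δ))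
    (L : ℝ) (hL : L = max Lf Lg)
    -- the set of optimal solutions and the optimal value
    (Sstar : Set V)
    (hSstar : Sstar = {x | x ∈ S ∧ G x ≤ 0 ∧ ∀ y ∈ S, G y ≤ 0 → f x ≤ f y})
    (hSstarne : Sstar.Nonempty)
    (fstar : ℝ) (hfstar : ∀ x ∈ Sstar, f x = fstar)
    -- the tolerance, the metric projection onto S, and the iterates
    (ε : ℝ) (hε : 0 < ε)
    (proj : V → V)
    (hproj : ∀ y, proj y ∈ S ∧ ∀ z ∈ S, ‖y - proj y‖ ≤ ‖y - z‖)
    (x : ℕ → V) (δ : ℕ → EuclideanSpace ℝ (Fin n)) (d : ℕ → V)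
    (hxS : ∀ k, 1 ≤ k → x k ∈ S) (hδΔ : ∀ k, 1 ≤ k → δ k ∈ Δ)
    (hstep : ∀ k, 1 ≤ k →
      (g (x k) (δ k) ≤ ε →
        d k ∈ subdiff f (x k) ∧ d k ≠ 0 ∧
          x (k + 1) = proj (x k - (ε / ‖d k‖ ^ 2) • d k)) ∧
      (ε < g (x k) (δ k) →
        d k ∈ subdiff (fun z => g z (δ k)) (x k) ∧ d k ≠ 0 ∧
          x (k + 1) = proj (x k - (g (x k) (δ k) / ‖d k‖ ^ 2) • d k)))
    -- the number of iterations
    (N : ℕ) (hN1 : 1 ≤ N)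
    (hN : (N : ℝ) ≥ L ^ 2 * Metric.infDist (x 1) Sstar ^ 2 / ε ^ 2) :
    (∃ k ∈ Finset.Icc 1 N, g (x k) (δ k) ≤ ε) ∧
      ∀ kstar ∈ Finset.Icc 1 N, g (x kstar) (δ kstar) ≤ ε →
        (∀ k ∈ Finset.Icc 1 N, g (x k) (δ k) ≤ ε → f (x kstar) ≤ f (x k)) →
        f (x kstar) ≤ fstar + ε ∧
          G (x kstar) ≤ ε + (G (x kstar) - g (x kstar) (δ kstar)) := by
  -- continuity of f and of each g · δ
  have hfc : Continuous f := hfcvx.locallyLipschitz.continuous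
  have hgc : ∀ δ' ∈ Δ, Continuous fun z => g z δ' := fun δ' hδ' =>
    (hgcvx δ' hδ').locallyLipschitz.continuous
  -- L is positive
  have hLpos : 0 < L := by
    rcases le_or_gt (g (x 1) (δ 1)) ε with h | h
    · obtain ⟨hd, hdne, -⟩ := (hstep 1 le_rfl).1 h
      have h1 := hLf (x 1) (hxS 1 le_rfl) (d 1) hd
      have h2 : 0 < ‖d 1‖ := norm_pos_iff.mpr hdne
      have : Lf ≤ L := hL ▸ le_max_left _ _
      linarith
    · obtain ⟨hd, hdne, -⟩ := (hstep 1 le_rfl).2 h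
      have h1 := hLg (δ 1) (hδΔ 1 le_rfl) (x 1) (hxS 1 le_rfl) (d 1) hd
      have h2 : 0 < ‖d 1‖ := norm_pos_iff.mpr hdne
      have : Lg ≤ L := hL ▸ le_max_right _ _
      linarith
  -- basic facts about G and Sstar
  have hGle : ∀ z ∈ S, G z ≤ 0 → ∀ δ' ∈ Δ, g z δ' ≤ 0 := by
    intro z hz hGz δ' hδ'
    have hb : BddAbove (g z '' Δ) := (hΔcp.image_of_continuousOn (hgcont z hz)).bddAbove
    have h1 : g z δ' ≤ sSup (g z '' Δ) := le_csSup hb (Set.mem_image_of_mem _ hδ')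
    rw [← hG z] at h1; linarith
  have hGge : ∀ z, (∀ δ' ∈ Δ, g z δ' ≤ 0) → G z ≤ 0 := by
    intro z hz
    rw [hG]
    exact Real.sSup_le (by rintro _ ⟨δ', hδ', rfl⟩; exact hz δ' hδ') le_rfl
  obtain ⟨x0, hx0⟩ := hSstarne
  have hx0' : x0 ∈ S ∧ G x0 ≤ 0 ∧ ∀ y ∈ S, G y ≤ 0 → f x0 ≤ f y := by
    rw [hSstar] at hx0; exact hx0
  have hfx0 : f x0 = fstar := hfstar x0 hx0
  -- Sstar is closed
  have hSstar' : Sstar = (S ∩ ⋂ δ' ∈ Δ, {z | g z δ' ≤ 0}) ∩ {z | f z ≤ fstar} := by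
    ext z
    simp only [hSstar, Set.mem_setOf_eq, Set.mem_inter_iff, Set.mem_iInter]
    constructor
    · rintro ⟨hzS, hzG, hmin⟩
      have hzstar : z ∈ Sstar := by rw [hSstar]; exact ⟨hzS, hzG, hmin⟩
      exact ⟨⟨hzS, fun δ' hδ' => hGle z hzS hzG δ' hδ'⟩, le_of_eq (hfstar z hzstar)⟩
    · rintro ⟨⟨hzS, hg0⟩, hf0⟩
      refine ⟨hzS, hGge z hg0, fun y hy hGy => ?_⟩
      calc f z ≤ fstar := hf0
        _ = f x0 := hfx0.symm
        _ ≤ f y := hx0'.2.2 y hy hGy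
  have hScls : IsClosed Sstar := by
    rw [hSstar']
    exact ((hScl.inter (isClosed_biInter fun δ' hδ' =>
      isClosed_le (hgc δ' hδ') continuous_const)).inter (isClosed_le hfc continuous_const))
  -- a nearest point of Sstar to x 1
  obtain ⟨xs, hxsS, hRdist⟩ := hScls.exists_infDist_eq_dist ⟨x0, hx0⟩ (x 1)
  have hxs' : xs ∈ S ∧ G xs ≤ 0 ∧ ∀ y ∈ S, G y ≤ 0 → f xs ≤ f y := by
    rw [hSstar] at hxsS; exact hxsS
  have hfxs : f xs = fstar := hfstar xs hxsS
  have hRnorm : Metric.infDist (x 1) Sstar = ‖x 1 - xs‖ := by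
    rw [hRdist, dist_eq_norm]
  -- key claim
  have hkey : ∃ k ∈ Finset.Icc 1 N, g (x k) (δ k) ≤ ε ∧ f (x k) ≤ fstar + ε := by
    by_contra hcon
    push_neg at hcon
    -- per-step strict decrease
    have hdec : ∀ k, 1 ≤ k → k ≤ N →
        ‖x (k + 1) - xs‖ ^ 2 < ‖x k - xs‖ ^ 2 - ε ^ 2 / L ^ 2 := by
      intro k hk1 hkN
      have hxk := hxS k hk1
      have hδk := hδΔ k hk1
      rcases le_or_gt (g (x k) (δ k)) ε with hle | hgt
      · -- objective step
        obtain ⟨hd, hdne, hupd⟩ := (hstep k hk1).1 hle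
        have hdpos : 0 < ‖d k‖ := norm_pos_iff.mpr hdne
        have hdL : ‖d k‖ ≤ L := le_trans (hLf (x k) hxk (d k) hd) (hL ▸ le_max_left _ _)
        have hfgap : fstar + ε < f (x k) := hcon k (Finset.mem_Icc.mpr ⟨hk1, hkN⟩) hle
        have hsub : f (x k) + (inner ℝ (d k) (xs - x k) : ℝ) ≤ f xs := hd xs
        have e1 : (inner ℝ (d k) (xs - x k) : ℝ) = inner ℝ (d k) xs - inner ℝ (d k) (x k) :=
          inner_sub_right _ _ _
        have e2 : (inner ℝ (d k) (x k - xs) : ℝ) = inner ℝ (d k) (x k) - inner ℝ (d k) xs :=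
          inner_sub_right _ _ _
        have hinner : ε < (inner ℝ (d k) (x k - xs) : ℝ) := by
          rw [e2]; rw [e1] at hsub; linarith
        set lam := ε / ‖d k‖ ^ 2 with hlam
        have hlampos : 0 < lam := div_pos hε (by positivity)
        have hy2 : ‖x k - lam • d k - xs‖ ^ 2 =
            ‖x k - xs‖ ^ 2 - 2 * lam * (inner ℝ (d k) (x k - xs) : ℝ) + lam ^ 2 * ‖d k‖ ^ 2 := by
          have hrw : x k - lam • d k - xs = (x k - xs) - lam • d k := by abel
          rw [hrw, step_decrease]
        have hlamsq : lam ^ 2 * ‖d k‖ ^ 2 = ε * lam := by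
          rw [hlam]; field_simp
        have hεlam : ε * lam = ε ^ 2 / ‖d k‖ ^ 2 := by rw [hlam]; ring
        have hdiv : ε ^ 2 / L ^ 2 ≤ ε ^ 2 / ‖d k‖ ^ 2 := by
          apply div_le_div_of_nonneg_left (by positivity) (by positivity)
          nlinarith
        have h3 : ‖x k - lam • d k - xs‖ ^ 2 < ‖x k - xs‖ ^ 2 - ε ^ 2 / L ^ 2 := by
          nlinarith
        have hcontr : ‖x (k + 1) - xs‖ ≤ ‖x k - lam • d k - xs‖ := by
          rw [hupd]
          exact proj_contract hScv (hproj (x k - lam • d k)).1 hxs'.1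
            (hproj (x k - lam • d k)).2
        have hsq := pow_le_pow_left₀ (norm_nonneg _) hcontr 2
        linarith
      · -- constraint step
        obtain ⟨hd, hdne, hupd⟩ := (hstep k hk1).2 hgt
        have hdpos : 0 < ‖d k‖ := norm_pos_iff.mpr hdne
        have hdL : ‖d k‖ ≤ L :=
          le_trans (hLg (δ k) hδk (x k) hxk (d k) hd) (hL ▸ le_max_right _ _)
        have hgxs : g xs (δ k) ≤ 0 := hGle xs hxs'.1 hxs'.2.1 (δ k) hδk
        have hsub : g (x k) (δ k) + (inner ℝ (d k) (xs - x k) : ℝ) ≤ g xs (δ k) := hd xs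
        have e1 : (inner ℝ (d k) (xs - x k) : ℝ) = inner ℝ (d k) xs - inner ℝ (d k) (x k) :=
          inner_sub_right _ _ _
        have e2 : (inner ℝ (d k) (x k - xs) : ℝ) = inner ℝ (d k) (x k) - inner ℝ (d k) xs :=
          inner_sub_right _ _ _
        have hinner : g (x k) (δ k) ≤ (inner ℝ (d k) (x k - xs) : ℝ) := by
          rw [e2]; rw [e1] at hsub; linarith
        set gk := g (x k) (δ k) with hgk
        have hgkpos : 0 < gk := lt_trans hε hgt
        set lam := gk / ‖d k‖ ^ 2 with hlam
        have hlampos : 0 < lam := div_pos hgkpos (by positivity)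
        have hy2 : ‖x k - lam • d k - xs‖ ^ 2 =
            ‖x k - xs‖ ^ 2 - 2 * lam * (inner ℝ (d k) (x k - xs) : ℝ) + lam ^ 2 * ‖d k‖ ^ 2 := by
          have hrw : x k - lam • d k - xs = (x k - xs) - lam • d k := by abel
          rw [hrw, step_decrease]
        have hlamsq : lam ^ 2 * ‖d k‖ ^ 2 = gk * lam := by
          rw [hlam]; field_simp
        have hglam : gk * lam = gk ^ 2 / ‖d k‖ ^ 2 := by rw [hlam]; ring
        have hdiv : ε ^ 2 / L ^ 2 < gk ^ 2 / ‖d k‖ ^ 2 := by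
          rw [div_lt_div_iff₀ (by positivity) (by positivity)]
          have hd2 : ‖d k‖ ^ 2 ≤ L ^ 2 := pow_le_pow_left₀ (norm_nonneg _) hdL 2
          have hε2 : ε ^ 2 < gk ^ 2 := pow_lt_pow_left₀ hgt hε.le (by norm_num)
          calc ε ^ 2 * ‖d k‖ ^ 2 ≤ ε ^ 2 * L ^ 2 :=
                mul_le_mul_of_nonneg_left hd2 (sq_nonneg ε)
            _ < gk ^ 2 * L ^ 2 := by
                exact mul_lt_mul_of_pos_right hε2 (by positivity)
        have hprod : lam * gk ≤ lam * (inner ℝ (d k) (x k - xs) : ℝ) :=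
          mul_le_mul_of_nonneg_left hinner hlampos.le
        have h3 : ‖x k - lam • d k - xs‖ ^ 2 < ‖x k - xs‖ ^ 2 - ε ^ 2 / L ^ 2 := by
          nlinarith [hy2, hlamsq, hglam, hdiv, hprod]
        have hcontr : ‖x (k + 1) - xs‖ ≤ ‖x k - lam • d k - xs‖ := by
          rw [hupd]
          exact proj_contract hScv (hproj (x k - lam • d k)).1 hxs'.1
            (hproj (x k - lam • d k)).2
        have hsq := pow_le_pow_left₀ (norm_nonneg _) hcontr 2
        linarith
    -- telescoping
    have hiter : ∀ j : ℕ, 1 ≤ j → j ≤ N →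
        ‖x (j + 1) - xs‖ ^ 2 < ‖x 1 - xs‖ ^ 2 - (j : ℝ) * (ε ^ 2 / L ^ 2) := by
      intro j
      induction j with
      | zero => omega
      | succ m ih =>
        intro _ hmN
        by_cases hm : m = 0
        · subst hm
          have := hdec 1 le_rfl (by omega)
          push_cast
          linarith
        · have hm1 : 1 ≤ m := Nat.one_le_iff_ne_zero.mpr hm
          have h1 := ih hm1 (by omega)
          have h2 := hdec (m + 1) (by omega) hmN
          push_cast
          push_cast at h1
          linarith
    have hfin := hiter N hN1 le_rfl
    have hεL : (0 : ℝ) < ε ^ 2 / L ^ 2 := by positivity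
    have hR2 : ‖x 1 - xs‖ ^ 2 ≤ (N : ℝ) * (ε ^ 2 / L ^ 2) := by
      rw [ge_iff_le, div_le_iff₀ (by positivity)] at hN
      rw [hRnorm] at hN
      have h2 : ‖x 1 - xs‖ ^ 2 ≤ (N : ℝ) * ε ^ 2 / L ^ 2 := by
        rw [le_div_iff₀ (by positivity : (0:ℝ) < L ^ 2)]
        linarith
      linarith [h2, (by ring : (N : ℝ) * (ε ^ 2 / L ^ 2) = (N : ℝ) * ε ^ 2 / L ^ 2)]
    have hnn : (0 : ℝ) ≤ ‖x (N + 1) - xs‖ ^ 2 := sq_nonneg _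
    linarith
  obtain ⟨k0, hk0mem, hk0g, hk0f⟩ := hkey
  refine ⟨⟨k0, hk0mem, hk0g⟩, ?_⟩
  intro kstar hks hgks hmin
  exact ⟨le_trans (hmin k0 hk0mem hk0g) hk0f, by linarith⟩
end

section
/- Let V be a finite-dimensional real inner product space, S ⊆ V a nonempty closed convex set, and Δ ⊆ ℝ^n a nonempty compact set. Let f : V → ℝ be convex, subdifferentiable at every point of S, with ‖d‖ ≤ L_f for all x ∈ S and d ∈ ∂f(x). For every δ ∈ Δ let g(·;δ) : V → ℝ be convex, subdifferentiable at every point of S, with ‖d‖ ≤ L_g for all x ∈ S and d ∈ ∂_x g(x;δ); for every x ∈ S assume g(x;·) is continuous on Δ. Set G(x) := max_{δ∈Δ} g(x;δ) and L := max{L_f, L_g}, and suppose the set S* of minimizers of f over {x ∈ S : G(x) ≤ 0} is nonempty with optimal value f*. Fix ε > 0, α ≥ 0, and sequences (x_k) in S, (δ_k) in Δ and (d_k) in V such that for every k: G(x_k) − g(x_k;δ_k) ≤ αε, and if g(x_k;δ_k) ≤ ε then d_k ∈ ∂f(x_k), d_k ≠ 0, and x_{k+1} = P_S(x_k − (ε/‖d_k‖²)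 d_k); otherwise d_k ∈ ∂_x g(x_k;δ_k), d_k ≠ 0, and x_{k+1} = P_S(x_k − (g(x_k;δ_k)/‖d_k‖²) d_k). Then for every positive integer N with N ≥ L² · dist(x_1, S*)² / ε², the set I_N := {k ∈ {1,…,N} : g(x_k;δ_k) ≤ ε} is nonempty, and for every k* ∈ I_N minimizing f(x_k) over k ∈ I_N one has f(x_{k*}) ≤ f* + ε and G(x_{k*}) ≤ (1+α)ε. -/
set_option maxHeartbeats 1000000 in
theorem stmt1 {V : Type*} [NormedAddCommGroup V] [InnerProductSpace ℝ V]
    [FiniteDimensional ℝ V] {n : ℕ}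
    -- the constraint set S
    (S : Set V) (hSne : S.Nonempty) (hScl : IsClosed S) (hScv : Convex ℝ S)
    -- the compact index set Δ
    (Δ : Set (EuclideanSpace ℝ (Fin n))) (hΔne : Δ.Nonempty) (hΔcp : IsCompact Δ)
    -- the objective f
    (f : V → ℝ) (hfcvx : ConvexOn ℝ Set.univ f)
    (Lf : ℝ) (hfsub : ∀ x ∈ S, (subdiff f x).Nonempty)
    (hLf : ∀ x ∈ S, ∀ d ∈ subdiff f x, ‖d‖ ≤ Lf)
    -- the constraint functions g(·;δ)
    (g : V → EuclideanSpace ℝ (Fin n) → ℝ)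
    (hgcvx : ∀ δ ∈ Δ, ConvexOn ℝ Set.univ fun x => g x δ)
    (Lg : ℝ) (hgsub : ∀ δ ∈ Δ, ∀ x ∈ S, (subdiff (fun z => g z δ) x).Nonempty)
    (hLg : ∀ δ ∈ Δ, ∀ x ∈ S, ∀ d ∈ subdiff (fun z => g z δ) x, ‖d‖ ≤ Lg)
    (hgcont : ∀ x ∈ S, ContinuousOn (g x) Δ)
    -- G and L
    (G : V → ℝ) (hG : ∀ x, G x = sSup (g x '' Δ))
    (L : ℝ) (hL : L = max Lf Lg)
    -- the set of optimal solutions and the optimal value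
    (Sstar : Set V)
    (hSstar : Sstar = {x | x ∈ S ∧ G x ≤ 0 ∧ ∀ y ∈ S, G y ≤ 0 → f x ≤ f y})
    (hSstarne : Sstar.Nonempty)
    (fstar : ℝ) (hfstar : ∀ x ∈ Sstar, f x = fstar)
    -- the tolerance, the metric projection onto S, and the iterates
    (ε : ℝ) (hε : 0 < ε) (α : ℝ) (hα : 0 ≤ α)
    (proj : V → V)
    (hproj : ∀ y, proj y ∈ S ∧ ∀ z ∈ S, ‖y - proj y‖ ≤ ‖y - z‖)
    (x : ℕ → V) (δ : ℕ → EuclideanSpace ℝ (Fin n)) (d : ℕ → V)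
    (hxS : ∀ k, 1 ≤ k → x k ∈ S) (hδΔ : ∀ k, 1 ≤ k → δ k ∈ Δ)
    (hξ : ∀ k, 1 ≤ k → G (x k) - g (x k) (δ k) ≤ α * ε)
    (hstep : ∀ k, 1 ≤ k →
      (g (x k) (δ k) ≤ ε →
        d k ∈ subdiff f (x k) ∧ d k ≠ 0 ∧
          x (k + 1) = proj (x k - (ε / ‖d k‖ ^ 2) • d k)) ∧
      (ε < g (x k) (δ k) →
        d k ∈ subdiff (fun z => g z (δ k)) (x k) ∧ d k ≠ 0 ∧
          x (k + 1) = proj (x k - (g (x k) (δ k) / ‖d k‖ ^ 2) • d k)))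
    -- the number of iterations
    (N : ℕ) (hN1 : 1 ≤ N)
    (hN : (N : ℝ) ≥ L ^ 2 * Metric.infDist (x 1) Sstar ^ 2 / ε ^ 2) :
    (∃ k ∈ Finset.Icc 1 N, g (x k) (δ k) ≤ ε) ∧
      ∀ kstar ∈ Finset.Icc 1 N, g (x kstar) (δ kstar) ≤ ε →
        (∀ k ∈ Finset.Icc 1 N, g (x k) (δ k) ≤ ε → f (x kstar) ≤ f (x k)) →
        f (x kstar) ≤ fstar + ε ∧ G (x kstar) ≤ (1 + α) * ε := by
  classical
  -- projection is nonexpansive towards points of S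
  have hcontr : ∀ y : V, ∀ z ∈ S, ‖proj y - z‖ ≤ ‖y - z‖ := by
    intro y z hz
    have hp := hproj y
    haveI : Nonempty S := hSne.to_subtype
    have hinf : ‖y - proj y‖ = ⨅ w : S, ‖y - (w : V)‖ := by
      apply le_antisymm
      · exact le_ciInf fun w => hp.2 w w.2
      · exact ciInf_le ⟨0, fun r ⟨w, hw⟩ => hw ▸ norm_nonneg _⟩ (⟨proj y, hp.1⟩ : S)
    have hineq := (norm_eq_iInf_iff_real_inner_le_zero hScv hp.1).mp hinf z hz
    have hkey : (inner ℝ (y - proj y) (proj y - z) : ℝ) = - inner ℝ (y - proj y) (z - proj y) := by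
      rw [show proj y - z = -(z - proj y) from (neg_sub _ _).symm, inner_neg_right]
    have hexp := norm_add_sq_real (y - proj y) (proj y - z)
    rw [sub_add_sub_cancel] at hexp
    have hsq : ‖proj y - z‖ ^ 2 ≤ ‖y - z‖ ^ 2 := by nlinarith [sq_nonneg ‖y - proj y‖]
    have h1 : (0:ℝ) ≤ ‖proj y - z‖ := norm_nonneg _
    have h2 : (0:ℝ) ≤ ‖y - z‖ := norm_nonneg _
    nlinarith
  -- L is positive
  have hL0 : 0 < L := by
    have h1 := hstep 1 le_rfl
    by_cases hc : g (x 1) (δ 1) ≤ ε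
    · obtain ⟨hd, hdne, _⟩ := h1.1 hc
      have := hLf (x 1) (hxS 1 le_rfl) _ hd
      have hn : 0 < ‖d 1‖ := norm_pos_iff.mpr hdne
      rw [hL]; exact lt_of_lt_of_le hn (le_trans this (le_max_left _ _))
    · obtain ⟨hd, hdne, _⟩ := h1.2 (lt_of_not_ge hc)
      have := hLg (δ 1) (hδΔ 1 le_rfl) (x 1) (hxS 1 le_rfl) _ hd
      have hn : 0 < ‖d 1‖ := norm_pos_iff.mpr hdne
      rw [hL]; exact lt_of_lt_of_le hn (le_trans this (le_max_right _ _))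
  set ρ : ℝ := ε ^ 2 / L ^ 2 with hρ
  have hρ0 : 0 < ρ := by positivity
  -- expansion identity
  have hexp : ∀ (a dd : V) (t : ℝ),
      ‖a - t • dd‖ ^ 2 = ‖a‖ ^ 2 - 2 * t * (inner ℝ a dd : ℝ) + t ^ 2 * ‖dd‖ ^ 2 := by
    intro a dd t
    rw [norm_sub_sq_real, real_inner_smul_right, norm_smul]
    simp [Real.norm_eq_abs, mul_pow, sq_abs]
    ring
  -- core per-step inequality
  have hcore : ∀ k, ∀ (t c : ℝ), 0 ≤ t → ∀ xs ∈ S,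
      x (k + 1) = proj (x k - t • d k) →
      c ≤ (inner ℝ (d k) (x k - xs) : ℝ) →
      ‖x (k + 1) - xs‖ ^ 2 ≤ ‖x k - xs‖ ^ 2 - (2 * t * c - t ^ 2 * ‖d k‖ ^ 2) := by
    intro k t c ht xs hxsS hx1 hcip
    have h1 : ‖x (k + 1) - xs‖ ≤ ‖(x k - xs) - t • d k‖ := by
      rw [hx1]
      have := hcontr (x k - t • d k) xs hxsS
      have heq : x k - t • d k - xs = (x k - xs) - t • d k := by abel
      rwa [heq] at this
    have h2 : ‖x (k + 1) - xs‖ ^ 2 ≤ ‖(x k - xs) - t • d k‖ ^ 2 :=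
      pow_le_pow_left₀ (norm_nonneg _) h1 2
    rw [hexp] at h2
    have hip : c ≤ (inner ℝ (x k - xs) (d k) : ℝ) := by rw [real_inner_comm]; exact hcip
    have h3 : t * c ≤ t * (inner ℝ (x k - xs) (d k) : ℝ) := mul_le_mul_of_nonneg_left hip ht
    linarith
  -- the decrease amounts
  set D : ℕ → ℝ := fun k => if g (x k) (δ k) ≤ ε
    then (2 * (f (x k) - fstar) - ε) * ε / ‖d k‖ ^ 2
    else (g (x k) (δ k)) ^ 2 / ‖d k‖ ^ 2 with hD
  -- the main contradiction lemma
  have key : ¬ (∀ k ∈ Finset.Icc 1 N, g (x k) (δ k) ≤ ε → fstar + ε < f (x k)) := by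
    intro H
    have hstepk : ∀ k, 1 ≤ k → k ≤ N →
        ρ < D k ∧ ∀ xs ∈ Sstar, ‖x (k + 1) - xs‖ ^ 2 ≤ ‖x k - xs‖ ^ 2 - D k := by
      intro k hk1 hkN
      have hkmem : k ∈ Finset.Icc 1 N := Finset.mem_Icc.mpr ⟨hk1, hkN⟩
      have hxkS : x k ∈ S := hxS k hk1
      by_cases hc : g (x k) (δ k) ≤ ε
      · obtain ⟨hd, hdne, hx1⟩ := (hstep k hk1).1 hc
        have hnd : 0 < ‖d k‖ := norm_pos_iff.mpr hdne
        have hndL : ‖d k‖ ≤ L := le_trans (hLf (x k) hxkS _ hd) (hL ▸ le_max_left _ _)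
        have hfk : fstar + ε < f (x k) := H k hkmem hc
        have hDk : D k = (2 * (f (x k) - fstar) - ε) * ε / ‖d k‖ ^ 2 := by
          rw [hD]; simp only [if_pos hc]
        constructor
        · rw [hDk, hρ, div_lt_div_iff₀ (by positivity) (by positivity)]
          have hd2 : ‖d k‖ ^ 2 ≤ L ^ 2 := by nlinarith [mul_self_le_mul_self hnd.le hndL]
          have ha : ε ^ 2 * ‖d k‖ ^ 2 ≤ ε ^ 2 * L ^ 2 :=
            mul_le_mul_of_nonneg_left hd2 (sq_nonneg ε)
          have hb0 : ε ^ 2 < (2 * (f (x k) - fstar) - ε) * ε := by nlinarith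
          have hb : ε ^ 2 * L ^ 2 < (2 * (f (x k) - fstar) - ε) * ε * L ^ 2 :=
            mul_lt_mul_of_pos_right hb0 (by positivity)
          linarith
        · intro xs hxs
          have hxsS : xs ∈ S := by rw [hSstar] at hxs; exact hxs.1
          have hfxs : f xs = fstar := hfstar xs hxs
          have hsub := hd xs
          have hneg : (inner ℝ (d k) (xs - x k) : ℝ) = - inner ℝ (d k) (x k - xs) := by
            rw [← neg_sub, inner_neg_right]
          rw [hneg, hfxs] at hsub
          have hcip : f (x k) - fstar ≤ (inner ℝ (d k) (x k - xs) : ℝ) := by linarith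
          have := hcore k (ε / ‖d k‖ ^ 2) (f (x k) - fstar) (by positivity) xs hxsS hx1 hcip
          have heqD : 2 * (ε / ‖d k‖ ^ 2) * (f (x k) - fstar)
              - (ε / ‖d k‖ ^ 2) ^ 2 * ‖d k‖ ^ 2 = D k := by
            rw [hDk]; field_simp
          rwa [heqD] at this
      · have hgk : ε < g (x k) (δ k) := lt_of_not_ge hc
        obtain ⟨hd, hdne, hx1⟩ := (hstep k hk1).2 hgk
        have hnd : 0 < ‖d k‖ := norm_pos_iff.mpr hdne
        have hndL : ‖d k‖ ≤ L :=
          le_trans (hLg (δ k) (hδΔ k hk1) (x k) hxkS _ hd) (hL ▸ le_max_right _ _)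
        have hDk : D k = (g (x k) (δ k)) ^ 2 / ‖d k‖ ^ 2 := by
          rw [hD]; simp only [if_neg hc]
        constructor
        · rw [hDk, hρ, div_lt_div_iff₀ (by positivity) (by positivity)]
          have hd2 : ‖d k‖ ^ 2 ≤ L ^ 2 := by nlinarith [mul_self_le_mul_self hnd.le hndL]
          have ha : ε ^ 2 * ‖d k‖ ^ 2 ≤ ε ^ 2 * L ^ 2 :=
            mul_le_mul_of_nonneg_left hd2 (sq_nonneg ε)
          have hb0 : ε ^ 2 < g (x k) (δ k) ^ 2 := by nlinarith [mul_self_lt_mul_self hε.le hgk]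
          have hb : ε ^ 2 * L ^ 2 < g (x k) (δ k) ^ 2 * L ^ 2 :=
            mul_lt_mul_of_pos_right hb0 (by positivity)
          linarith
        · intro xs hxs
          have hxsmem := hxs
          rw [hSstar] at hxsmem
          obtain ⟨hxsS, hGxs, _⟩ := hxsmem
          have hgxs : g xs (δ k) ≤ 0 := by
            have hb : BddAbove (g xs '' Δ) :=
              (hΔcp.image_of_continuousOn (hgcont xs hxsS)).bddAbove
            have := le_csSup hb ⟨δ k, hδΔ k hk1, rfl⟩
            rw [← hG] at this
            linarith
          have hsub := hd xs
          simp only at hsub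
          have hneg : (inner ℝ (d k) (xs - x k) : ℝ) = - inner ℝ (d k) (x k - xs) := by
            rw [← neg_sub, inner_neg_right]
          rw [hneg] at hsub
          have hcip : g (x k) (δ k) ≤ (inner ℝ (d k) (x k - xs) : ℝ) := by linarith
          have hgpos : 0 < g (x k) (δ k) := lt_trans hε hgk
          have := hcore k (g (x k) (δ k) / ‖d k‖ ^ 2) (g (x k) (δ k))
            (by positivity) xs hxsS hx1 hcip
          have heqD : 2 * (g (x k) (δ k) / ‖d k‖ ^ 2) * (g (x k) (δ k))
              - (g (x k) (δ k) / ‖d k‖ ^ 2) ^ 2 * ‖d k‖ ^ 2 = D k := by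
            rw [hDk]; field_simp; ring
          rwa [heqD] at this
    -- telescoping
    have hiter : ∀ m, 1 ≤ m → m ≤ N → ∀ xs ∈ Sstar,
        ‖x (m + 1) - xs‖ ^ 2 ≤ ‖x 1 - xs‖ ^ 2 - ((m : ℝ) - 1) * ρ - D 1 := by
      intro m
      induction m with
      | zero => intro h; omega
      | succ m ih =>
        intro _ hmN xs hxs
        by_cases hm : m = 0
        · subst hm
          have := (hstepk 1 le_rfl hN1).2 xs hxs
          push_cast
          simpa using this
        · have hm1 : 1 ≤ m := Nat.one_le_iff_ne_zero.mpr hm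
          have h1 := ih hm1 (by omega) xs hxs
          have h2 := (hstepk (m + 1) (by omega) hmN).2 xs hxs
          have h3 := (hstepk (m + 1) (by omega) hmN).1
          push_cast
          push_cast at h1
          linarith
    -- lower bound on the initial distance
    have hD1 : ρ < D 1 := (hstepk 1 le_rfl hN1).1
    set B : ℝ := ((N : ℝ) - 1) * ρ + D 1 with hB
    have hB0 : 0 ≤ B := by
      have : (1:ℝ) ≤ (N:ℝ) := by exact_mod_cast hN1
      nlinarith
    have hlow : ∀ xs ∈ Sstar, B ≤ ‖x 1 - xs‖ ^ 2 := by
      intro xs hxs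
      have h1 := hiter N hN1 le_rfl xs hxs
      have h2 : (0:ℝ) ≤ ‖x (N + 1) - xs‖ ^ 2 := by positivity
      rw [hB]; linarith
    set dI : ℝ := Metric.infDist (x 1) Sstar with hdI
    have hsqrtB : Real.sqrt B ≤ dI := by
      by_contra hlt
      push_neg at hlt
      obtain ⟨y, hy, hdy⟩ := (Metric.infDist_lt_iff hSstarne).mp hlt
      rw [dist_eq_norm] at hdy
      have h1 := hlow y hy
      have h2 : ‖x 1 - y‖ ^ 2 < (Real.sqrt B) ^ 2 := by
        have := norm_nonneg (x 1 - y)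
        nlinarith [Real.sqrt_nonneg B]
      rw [Real.sq_sqrt hB0] at h2
      linarith
    have hdI2 : B ≤ dI ^ 2 := by
      have h0 : 0 ≤ Real.sqrt B := Real.sqrt_nonneg _
      nlinarith [Real.sq_sqrt hB0]
    -- upper bound from hN
    have hNρ : dI ^ 2 ≤ (N : ℝ) * ρ := by
      have h1 : L ^ 2 * dI ^ 2 / ε ^ 2 ≤ (N : ℝ) := ge_iff_le.mp hN
      have h2 : L ^ 2 * dI ^ 2 ≤ (N : ℝ) * ε ^ 2 := by
        rw [div_le_iff₀ (by positivity)] at h1; linarith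
      rw [hρ, ← mul_div_assoc, le_div_iff₀ (by positivity)]
      nlinarith
    rw [hB] at hdI2
    linarith
  constructor
  · by_contra h
    push_neg at h
    exact key fun k hk hg => absurd hg (not_le.mpr (h k hk))
  · intro kstar hkmem hgks hmin
    have hk1 : 1 ≤ kstar := (Finset.mem_Icc.mp hkmem).1
    constructor
    · by_contra hf
      push_neg at hf
      exact key fun k hk hg => lt_of_lt_of_le hf (hmin k hk hg)
    · have h1 := hξ kstar hk1
      have h2 : (1 + α) * ε = ε + α * ε := by ring
      linarith
end

section
/- Let V be a finite-dimensional real inner product space, S ⊆ V a nonempty closed convex set, f : V → ℝ a convex function, and let x ∈ S, x* ∈ S, ε > 0, L > 0, and d ∈ ∂f(x) with d ≠ 0 and ‖d‖ ≤ L. If f(x) > f(x*) + ε, then ‖P_S(x − (ε/‖d‖²) d) − x*‖² < ‖x − x*‖² − ε²/L². -/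
lemma proj_vi {V : Type*} [NormedAddCommGroup V] [InnerProductSpace ℝ V]
    (S : Set V) (hScv : Convex ℝ S) (proj : V → V)
    (hproj : ∀ y, proj y ∈ S ∧ ∀ z ∈ S, ‖y - proj y‖ ≤ ‖y - z‖)
    (y z : V) (hz : z ∈ S) : (inner ℝ (y - proj y) (z - proj y) : ℝ) ≤ 0 := by
  set p := proj y with hp
  by_contra h
  push_neg at h
  set c : ℝ := inner ℝ (y - p) (z - p) with hc
  have hzp : z ≠ p := by
    intro hzp
    rw [hc, hzp, sub_self, inner_zero_right] at h
    exact lt_irrefl 0 h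
  have hn : (0:ℝ) < ‖z - p‖ ^ 2 := by
    have : z - p ≠ 0 := sub_ne_zero.mpr hzp
    exact pow_pos (norm_pos_iff.mpr this) 2
  set t : ℝ := min 1 (c / ‖z - p‖ ^ 2) with ht
  have ht0 : 0 < t := lt_min one_pos (div_pos h hn)
  have ht1 : t ≤ 1 := min_le_left _ _
  have htc : t * ‖z - p‖ ^ 2 ≤ c := by
    have : t ≤ c / ‖z - p‖ ^ 2 := min_le_right _ _
    calc t * ‖z - p‖ ^ 2 ≤ (c / ‖z - p‖ ^ 2) * ‖z - p‖ ^ 2 := by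
          exact mul_le_mul_of_nonneg_right this hn.le
      _ = c := div_mul_cancel₀ _ hn.ne'
  have hmem : (1 - t) • p + t • z ∈ S :=
    hScv (hproj y).1 hz (by linarith) ht0.le (by ring)
  have hle := (hproj y).2 _ hmem
  have heq : y - ((1 - t) • p + t • z) = (y - p) - t • (z - p) := by
    simp only [smul_sub, sub_smul, one_smul]; abel
  rw [heq] at hle
  have hsq : ‖y - p‖ ^ 2 ≤ ‖(y - p) - t • (z - p)‖ ^ 2 := by
    have h1 : (0:ℝ) ≤ ‖(y - p) - t • (z - p)‖ := norm_nonneg _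
    nlinarith [norm_nonneg (y - p)]
  have hexp : ‖(y - p) - t • (z - p)‖ ^ 2
      = ‖y - p‖ ^ 2 - 2 * (t * c) + t ^ 2 * ‖z - p‖ ^ 2 := by
    rw [norm_sub_sq_real, real_inner_smul_right, norm_smul]
    rw [hc]
    simp [mul_pow, abs_of_pos ht0]
  rw [hexp] at hsq
  -- 2*t*c ≤ t^2 * ‖z-p‖^2 = t * (t * ‖z-p‖^2) ≤ t * c
  nlinarith [mul_le_mul_of_nonneg_left htc ht0.le]

theorem stmt2 {V : Type*} [NormedAddCommGroup V] [InnerProductSpace ℝ V]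
    [FiniteDimensional ℝ V]
    (S : Set V) (hSne : S.Nonempty) (hScl : IsClosed S) (hScv : Convex ℝ S)
    (f : V → ℝ) (hf : ConvexOn ℝ Set.univ f)
    (x xstar : V) (hx : x ∈ S) (hxstar : xstar ∈ S)
    (ε L : ℝ) (hε : 0 < ε) (hL : 0 < L)
    (d : V) (hd : d ∈ subdiff f x) (hd0 : d ≠ 0) (hdL : ‖d‖ ≤ L)
    (proj : V → V)
    (hproj : ∀ y, proj y ∈ S ∧ ∀ z ∈ S, ‖y - proj y‖ ≤ ‖y - z‖)
    (hfx : f x > f xstar + ε) :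
    ‖proj (x - (ε / ‖d‖ ^ 2) • d) - xstar‖ ^ 2 < ‖x - xstar‖ ^ 2 - ε ^ 2 / L ^ 2 := by
  have hdn : (0:ℝ) < ‖d‖ := norm_pos_iff.mpr hd0
  have hdn2 : (0:ℝ) < ‖d‖ ^ 2 := by positivity
  set t : ℝ := ε / ‖d‖ ^ 2 with htdef
  have ht0 : 0 < t := div_pos hε hdn2
  set y : V := x - t • d with hy
  set p : V := proj y with hpdef
  -- Step 1: ‖p - xstar‖² ≤ ‖y - xstar‖²
  have hvi : (inner ℝ (y - p) (xstar - p) : ℝ) ≤ 0 :=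
    proj_vi S hScv proj hproj y xstar hxstar
  have hstep1 : ‖p - xstar‖ ^ 2 ≤ ‖y - xstar‖ ^ 2 := by
    have hdecomp : y - xstar = (y - p) + (p - xstar) := by abel
    have : ‖y - xstar‖ ^ 2
        = ‖y - p‖ ^ 2 + 2 * (inner ℝ (y - p) (p - xstar) : ℝ) + ‖p - xstar‖ ^ 2 := by
      rw [hdecomp, norm_add_sq_real]
    have hinner : (inner ℝ (y - p) (p - xstar) : ℝ) = - (inner ℝ (y - p) (xstar - p) : ℝ) := by
      rw [← inner_neg_right]; congr 1; abel
    nlinarith [sq_nonneg ‖y - p‖]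
  -- Step 2: subgradient inequality gives inner ℝ d (x - xstar) > ε
  have hsub := hd xstar
  have hinner2 : (inner ℝ d (x - xstar) : ℝ) > ε := by
    have : (inner ℝ d (xstar - x) : ℝ) = - (inner ℝ d (x - xstar) : ℝ) := by
      rw [← inner_neg_right]; congr 1; abel
    rw [this] at hsub
    linarith
  -- Step 3: expand ‖y - xstar‖²
  have hexp : ‖y - xstar‖ ^ 2
      = ‖x - xstar‖ ^ 2 - 2 * (t * (inner ℝ (x - xstar) d : ℝ)) + t ^ 2 * ‖d‖ ^ 2 := by
    have hdecomp : y - xstar = (x - xstar) - t • d := by rw [hy]; abel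
    rw [hdecomp, norm_sub_sq_real, real_inner_smul_right, norm_smul]
    simp [mul_pow, abs_of_pos ht0]
  have hsymm : (inner ℝ (x - xstar) d : ℝ) = (inner ℝ d (x - xstar) : ℝ) :=
    real_inner_comm _ _
  -- t² ‖d‖² = t ε,  and  -2 t ⟨d,x-x*⟩ < -2 t ε
  have htd : t * ‖d‖ ^ 2 = ε := div_mul_cancel₀ _ hdn2.ne'
  have key : ‖y - xstar‖ ^ 2 < ‖x - xstar‖ ^ 2 - ε ^ 2 / ‖d‖ ^ 2 := by
    rw [hexp, hsymm]
    have h1 : t * (inner ℝ d (x - xstar) : ℝ) > t * ε :=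
      mul_lt_mul_of_pos_left hinner2 ht0
    have h2 : t ^ 2 * ‖d‖ ^ 2 = t * ε := by rw [pow_two]; rw [mul_assoc, htd]
    have h3 : t * ε = ε ^ 2 / ‖d‖ ^ 2 := by
      rw [htdef]; field_simp
    linarith
  have hLcmp : ε ^ 2 / L ^ 2 ≤ ε ^ 2 / ‖d‖ ^ 2 := by
    apply div_le_div_of_nonneg_left (by positivity) hdn2
    nlinarith
  calc ‖p - xstar‖ ^ 2 ≤ ‖y - xstar‖ ^ 2 := hstep1
    _ < ‖x - xstar‖ ^ 2 - ε ^ 2 / ‖d‖ ^ 2 := key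
    _ ≤ ‖x - xstar‖ ^ 2 - ε ^ 2 / L ^ 2 := by linarith
end

section
/- Let n ≥ 2 and let r ∈ (0, √2]. For every x ∈ Δ^{n-1}, the uniform distribution P on Δ^{n-1} satisfies P( B(x,r) ∩ Δ^{n-1} ) ≥ (r/√2)^{n-1}, where B(x,r) is the closed Euclidean ball of center x and radius r in ℝ^n. -/
open MeasureTheory
open scoped NNReal ENNReal

/-- The standard simplex `Δ^{n-1}`, viewed inside Euclidean space (so that the metric,
and hence the Hausdorff measure, is the Euclidean one). -/
def stdSimplexE (n : ℕ) : Set (EuclideanSpace ℝ (Fin n)) :=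
  {δ | (∀ i, 0 ≤ δ i) ∧ ∑ i, δ i = 1}

lemma stdSimplexE_coord_le_one {n : ℕ} {a : EuclideanSpace ℝ (Fin n)}
    (ha : a ∈ stdSimplexE n) (i : Fin n) : a i ≤ 1 := by
  obtain ⟨h0, h1⟩ := ha
  calc a i ≤ ∑ j, a j := Finset.single_le_sum (fun j _ => h0 j) (Finset.mem_univ i)
    _ = 1 := h1

lemma stdSimplexE_dist_le {n : ℕ} {a b : EuclideanSpace ℝ (Fin n)}
    (ha : a ∈ stdSimplexE n) (hb : b ∈ stdSimplexE n) : dist a b ≤ Real.sqrt 2 := by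
  rw [EuclideanSpace.dist_eq]
  apply Real.sqrt_le_sqrt
  have : ∑ i, dist (a i) (b i) ^ 2 ≤ ∑ i, (a i + b i) := by
    apply Finset.sum_le_sum
    intro i _
    have h0a := ha.1 i
    have h0b := hb.1 i
    have h1a := stdSimplexE_coord_le_one ha i
    have h1b := stdSimplexE_coord_le_one hb i
    rw [Real.dist_eq, sq_abs]
    nlinarith
  calc ∑ i, dist (a i) (b i) ^ 2 ≤ ∑ i, (a i + b i) := this
    _ = 2 := by rw [Finset.sum_add_distrib, ha.2, hb.2]; norm_num

/-- Map from `ℝ^m` (sup metric) to the hyperplane in Euclidean `ℝ^{m+1}`. -/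
noncomputable def gmap (m : ℕ) (y : Fin m → ℝ) : EuclideanSpace ℝ (Fin (m + 1)) :=
  (WithLp.equiv 2 (Fin (m + 1) → ℝ)).symm (Fin.snoc y (1 - ∑ i, y i))

lemma gmap_lipschitz (m : ℕ) : LipschitzWith (m + 1 : ℝ≥0) (gmap m) := by
  apply LipschitzWith.of_dist_le_mul
  intro y z
  have hD : 0 ≤ dist y z := dist_nonneg
  rw [EuclideanSpace.dist_eq]
  have hcoord : ∀ j : Fin m, dist (y j) (z j) ≤ dist y z := fun j => dist_le_pi_dist y z j
  have key : ∑ i : Fin (m + 1), dist (gmap m y i) (gmap m z i) ^ 2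
      ≤ ((m + 1 : ℝ) * dist y z) ^ 2 := by
    rw [Fin.sum_univ_castSucc]
    have h1 : ∀ j : Fin m, dist (gmap m y j.castSucc) (gmap m z j.castSucc) ^ 2
        ≤ dist y z ^ 2 := by
      intro j
      have : gmap m y j.castSucc = y j := by simp [gmap]
      have h2 : gmap m z j.castSucc = z j := by simp [gmap]
      rw [this, h2]
      exact pow_le_pow_left₀ dist_nonneg (hcoord j) 2
    have hsum1 : ∑ j : Fin m, dist (gmap m y j.castSucc) (gmap m z j.castSucc) ^ 2
        ≤ m * dist y z ^ 2 := by
      calc ∑ j : Fin m, dist (gmap m y j.castSucc) (gmap m z j.castSucc) ^ 2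
          ≤ ∑ _j : Fin m, dist y z ^ 2 := Finset.sum_le_sum fun j _ => h1 j
        _ = m * dist y z ^ 2 := by simp [mul_comm]
    have hlast : dist (gmap m y (Fin.last m)) (gmap m z (Fin.last m)) ^ 2
        ≤ (m * dist y z) ^ 2 := by
      have hy : gmap m y (Fin.last m) = 1 - ∑ i, y i := by simp [gmap]
      have hz : gmap m z (Fin.last m) = 1 - ∑ i, z i := by simp [gmap]
      rw [hy, hz]
      have : dist (1 - ∑ i, y i) (1 - ∑ i, z i) ≤ m * dist y z := by
        rw [Real.dist_eq]
        have : |(1 - ∑ i, y i) - (1 - ∑ i, z i)| = |∑ i, (y i - z i)| := by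
          rw [Finset.sum_sub_distrib, abs_sub_comm]; congr 1; ring
        rw [this]
        calc |∑ i, (y i - z i)| ≤ ∑ i, |y i - z i| := Finset.abs_sum_le_sum_abs _ _
          _ ≤ ∑ _i : Fin m, dist y z := Finset.sum_le_sum fun i _ => by
              rw [← Real.dist_eq]; exact hcoord i
          _ = m * dist y z := by simp [mul_comm]
      exact pow_le_pow_left₀ dist_nonneg this 2
    nlinarith [hsum1, hlast, sq_nonneg (dist y z), Nat.cast_nonneg (α := ℝ) m]
  calc Real.sqrt (∑ i : Fin (m+1), dist (gmap m y i) (gmap m z i) ^ 2)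
      ≤ Real.sqrt (((m + 1 : ℝ) * dist y z) ^ 2) := Real.sqrt_le_sqrt key
    _ = (m + 1 : ℝ) * dist y z := Real.sqrt_sq (by positivity)
    _ = ((m + 1 : ℝ≥0) : ℝ) * dist y z := by push_cast; ring

lemma gmap_mem {m : ℕ} {y : Fin m → ℝ} (h0 : ∀ j, 0 ≤ y j) (h1 : ∑ i, y i ≤ 1) :
    gmap m y ∈ stdSimplexE (m + 1) := by
  constructor
  · intro i
    refine Fin.lastCases ?_ ?_ i
    · simpa [gmap] using by linarith
    · intro j; simpa [gmap] using h0 j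
  · rw [Fin.sum_univ_castSucc]
    simp [gmap]

lemma stdSimplexE_subset_gmap_image (m : ℕ) :
    stdSimplexE (m + 1) ⊆ gmap m '' (Set.univ.pi fun _ : Fin m => Set.Icc (0:ℝ) 1) := by
  intro δ hδ
  refine ⟨fun j => δ j.castSucc, ?_, ?_⟩
  · intro j _
    exact ⟨hδ.1 _, stdSimplexE_coord_le_one hδ _⟩
  · have hsum : ∑ j : Fin m, δ j.castSucc = 1 - δ (Fin.last m) := by
      have := hδ.2
      rw [Fin.sum_univ_castSucc] at this
      linarith
    ext i
    refine Fin.lastCases ?_ ?_ i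
    · simp [gmap, hsum]
    · intro j; simp [gmap]

/-- Projection from Euclidean `ℝ^{m+1}` to `ℝ^m` (sup metric), dropping the last coord. -/
def pmap (m : ℕ) (z : EuclideanSpace ℝ (Fin (m + 1))) : Fin m → ℝ :=
  fun j => z j.castSucc

lemma euclidean_coord_dist_le {k : ℕ} (z w : EuclideanSpace ℝ (Fin k)) (i : Fin k) :
    dist (z i) (w i) ≤ dist z w := by
  rw [EuclideanSpace.dist_eq]
  have : dist (z i) (w i) ^ 2 ≤ ∑ j, dist (z j) (w j) ^ 2 :=
    Finset.single_le_sum (f := fun j => dist (z j) (w j) ^ 2) (fun j _ => sq_nonneg _)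
      (Finset.mem_univ i)
  calc dist (z i) (w i) = Real.sqrt (dist (z i) (w i) ^ 2) := (Real.sqrt_sq dist_nonneg).symm
    _ ≤ _ := Real.sqrt_le_sqrt this

lemma pmap_lipschitz (m : ℕ) : LipschitzWith 1 (pmap m) := by
  apply LipschitzWith.of_dist_le_mul
  intro z w
  rw [NNReal.coe_one, one_mul]
  refine dist_pi_le_iff dist_nonneg |>.2 fun j => ?_
  exact euclidean_coord_dist_le z w j.castSucc

lemma box_subset_pmap_image (m : ℕ) :
    (Set.univ.pi fun _ : Fin m => Set.Icc (0:ℝ) ((m+1 : ℝ)⁻¹)) ⊆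
      pmap m '' stdSimplexE (m + 1) := by
  intro y hy
  have h0 : ∀ j, 0 ≤ y j := fun j => (hy j (Set.mem_univ j)).1
  have h1 : ∑ i, y i ≤ 1 := by
    calc ∑ i, y i ≤ ∑ _i : Fin m, (m+1 : ℝ)⁻¹ :=
          Finset.sum_le_sum fun i _ => (hy i (Set.mem_univ i)).2
      _ = m * (m+1 : ℝ)⁻¹ := by simp [mul_comm]
      _ ≤ 1 := by
          rw [← le_div_iff₀ (by positivity), one_div, inv_inv]
          push_cast; linarith
  refine ⟨gmap m y, gmap_mem h0 h1, ?_⟩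
  funext j
  simp [pmap, gmap]

lemma measure_stdSimplexE_pos (m : ℕ) : 0 < μH[(m : ℝ)] (stdSimplexE (m + 1)) := by
  have hle := (pmap_lipschitz m).hausdorffMeasure_image_le (d := (m:ℝ))
    (Nat.cast_nonneg m) (stdSimplexE (m + 1))
  have hmono : μH[(m : ℝ)] (Set.univ.pi fun _ : Fin m => Set.Icc (0:ℝ) ((m+1 : ℝ)⁻¹))
      ≤ μH[(m : ℝ)] (pmap m '' stdSimplexE (m + 1)) :=
    measure_mono (box_subset_pmap_image m)
  have hpi : (μH[(m : ℝ)] : Measure (Fin m → ℝ)) = volume := by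
    have := hausdorffMeasure_pi_real (ι := Fin m)
    simpa using this
  have hvol : (0 : ℝ≥0∞) < μH[(m : ℝ)] (Set.univ.pi fun _ : Fin m => Set.Icc (0:ℝ) ((m+1 : ℝ)⁻¹)) := by
    rw [hpi, volume_pi_pi]
    simp only [Real.volume_Icc]
    rw [Finset.prod_const]
    apply ENNReal.pow_pos
    simp only [sub_zero, ENNReal.ofReal_pos]
    positivity
  calc (0 : ℝ≥0∞) < _ := hvol
    _ ≤ μH[(m : ℝ)] (pmap m '' stdSimplexE (m + 1)) := hmono
    _ ≤ (1:ℝ≥0) ^ (m:ℝ) * μH[(m : ℝ)] (stdSimplexE (m + 1)) := hle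
    _ = μH[(m : ℝ)] (stdSimplexE (m + 1)) := by simp

lemma measure_stdSimplexE_lt_top (m : ℕ) : μH[(m : ℝ)] (stdSimplexE (m + 1)) < ⊤ := by
  have hle := (gmap_lipschitz m).hausdorffMeasure_image_le (d := (m:ℝ))
    (Nat.cast_nonneg m) (Set.univ.pi fun _ : Fin m => Set.Icc (0:ℝ) 1)
  have hpi : (μH[(m : ℝ)] : Measure (Fin m → ℝ)) = volume := by
    have := hausdorffMeasure_pi_real (ι := Fin m)
    simpa using this
  have hvol : μH[(m : ℝ)] (Set.univ.pi fun _ : Fin m => Set.Icc (0:ℝ) 1) = 1 := by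
    rw [hpi, volume_pi_pi]
    simp
  calc μH[(m : ℝ)] (stdSimplexE (m + 1))
      ≤ μH[(m : ℝ)] (gmap m '' (Set.univ.pi fun _ : Fin m => Set.Icc (0:ℝ) 1)) :=
        measure_mono (stdSimplexE_subset_gmap_image m)
    _ ≤ ((m + 1 : ℝ≥0) : ℝ≥0∞) ^ (m:ℝ) * μH[(m : ℝ)] (Set.univ.pi fun _ : Fin m => Set.Icc (0:ℝ) 1) := hle
    _ = ((m + 1 : ℝ≥0) : ℝ≥0∞) ^ (m:ℝ) := by rw [hvol, mul_one]
    _ < ⊤ := by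
        apply ENNReal.rpow_lt_top_of_nonneg (Nat.cast_nonneg m)
        exact ENNReal.coe_ne_top

theorem stmt6 {n : ℕ} (hn : 2 ≤ n) (r : ℝ) (hr0 : 0 < r) (hr2 : r ≤ Real.sqrt 2)
    (x : EuclideanSpace ℝ (Fin n)) (hx : x ∈ stdSimplexE n) :
    ENNReal.ofReal ((r / Real.sqrt 2) ^ (n - 1)) ≤
      μH[(n : ℝ) - 1] (Metric.closedBall x r ∩ stdSimplexE n) /
        μH[(n : ℝ) - 1] (stdSimplexE n) := by
  obtain ⟨m, rfl⟩ : ∃ m, n = m + 1 := ⟨n - 1, by omega⟩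
  have hd : ((m + 1 : ℕ) : ℝ) - 1 = (m : ℝ) := by push_cast; ring
  rw [hd]
  have hmm : m + 1 - 1 = m := rfl
  rw [hmm]
  set t : ℝ := r / Real.sqrt 2 with ht
  have hs2 : (0:ℝ) < Real.sqrt 2 := by positivity
  have ht0 : 0 < t := by positivity
  have ht1 : t ≤ 1 := by
    rw [ht, div_le_one hs2]; exact hr2
  set S := stdSimplexE (m + 1)
  set M := μH[(m : ℝ)] S with hM
  have hMpos := measure_stdSimplexE_pos m
  have hMtop := measure_stdSimplexE_lt_top m
  have key : μH[(m : ℝ)] (AffineMap.homothety x t '' S) = ‖t‖₊ ^ (m:ℝ) • M :=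
    hausdorffMeasure_homothety_image (Nat.cast_nonneg m) x (ne_of_gt ht0) S
  have hsub : AffineMap.homothety x t '' S ⊆ Metric.closedBall x r ∩ S := by
    rintro _ ⟨δ, hδ, rfl⟩
    constructor
    · rw [Metric.mem_closedBall, dist_homothety_center]
      have hdist : dist x δ ≤ Real.sqrt 2 := stdSimplexE_dist_le hx hδ
      have : ‖t‖ = t := abs_of_pos ht0
      rw [this]
      calc t * dist x δ ≤ t * Real.sqrt 2 := by nlinarith
        _ = r := by rw [ht]; field_simp
    · have happ : AffineMap.homothety x t δ = t • (δ - x) + x := by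
        simp [AffineMap.homothety_apply]
      rw [happ]
      constructor
      · intro i
        have : (t • (δ - x) + x : EuclideanSpace ℝ (Fin (m+1))) i
            = t * (δ i - x i) + x i := by
          simp [PiLp.add_apply, PiLp.smul_apply, PiLp.sub_apply, smul_eq_mul]
        rw [this]
        have h0δ := hδ.1 i
        have h0x := hx.1 i
        nlinarith
      · have : ∑ i, (t • (δ - x) + x : EuclideanSpace ℝ (Fin (m+1))) i
            = ∑ i, (t * (δ i - x i) + x i) := by
          apply Finset.sum_congr rfl
          intro i _
          simp [PiLp.add_apply, PiLp.smul_apply, PiLp.sub_apply, smul_eq_mul]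
        rw [this]
        have hδ2 := hδ.2
        have hx2 := hx.2
        simp only [mul_sub]
        rw [Finset.sum_add_distrib, Finset.sum_sub_distrib, ← Finset.mul_sum, ← Finset.mul_sum]
        rw [hδ2, hx2]
        ring
  rw [ENNReal.le_div_iff_mul_le (Or.inl hMpos.ne') (Or.inl hMtop.ne)]
  have hcast : ENNReal.ofReal (t ^ m) = (‖t‖₊ : ℝ≥0∞) ^ (m : ℝ) := by
    rw [ENNReal.rpow_natCast, ENNReal.ofReal_pow ht0.le]
    congr 1
    exact (Real.enorm_eq_ofReal ht0.le).symm
  calc ENNReal.ofReal (t ^ m) * M = (‖t‖₊ : ℝ≥0∞) ^ (m : ℝ) * M := by rw [hcast]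
    _ = ‖t‖₊ ^ (m:ℝ) • M := by rw [ENNReal.smul_def, smul_eq_mul]; norm_cast
    _ = μH[(m : ℝ)] (AffineMap.homothety x t '' S) := key.symm
    _ ≤ μH[(m : ℝ)] (Metric.closedBall x r ∩ S) := measure_mono hsub
end

section
/- Let n and r be positive integers. For every δ ∈ Δ_r^{n-1}, the set G_r(δ) := B(δ, √2/r) ∩ Δ_r^{n-1} has cardinality at least n. Moreover, |G_r(e_i)| = n for every standard basis vector e_i, i = 1,…,n. -/
/-- The regular grid `Δ_r^{n-1}` of the standard simplex: points of the simplex all of whose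
coordinates become nonnegative integers after multiplication by `r`. -/
def regGrid (n r : ℕ) : Set (EuclideanSpace ℝ (Fin n)) :=
  {δ | (∀ i, 0 ≤ δ i) ∧ (∑ i, δ i) = 1 ∧ ∀ i, ∃ m : ℕ, (r : ℝ) * δ i = m}

/-- Move mass `1/r` from coordinate `j` to coordinate `i`. -/
noncomputable def mv (r : ℕ) {n : ℕ} (δ : EuclideanSpace ℝ (Fin n)) (j i : Fin n) :
    EuclideanSpace ℝ (Fin n) :=
  WithLp.toLp 2 (fun k => δ k + ((if k = i then (1:ℝ) else 0) - (if k = j then 1 else 0)) / r)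

lemma mv_apply (r : ℕ) {n : ℕ} (δ : EuclideanSpace ℝ (Fin n)) (j i k : Fin n) :
    mv r δ j i k = δ k + ((if k = i then (1:ℝ) else 0) - (if k = j then 1 else 0)) / r := rfl

lemma mv_mem {n r : ℕ} (hr : 0 < r) {δ : EuclideanSpace ℝ (Fin n)} (hδ : δ ∈ regGrid n r)
    {j : Fin n} (hj : 0 < δ j) (i : Fin n) : mv r δ j i ∈ regGrid n r := by
  obtain ⟨hpos, hsum, hint⟩ := hδ
  have hr' : (0:ℝ) < r := by exact_mod_cast hr
  -- δ j ≥ 1/r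
  obtain ⟨mj, hmj⟩ := hint j
  have hmj1 : 1 ≤ (mj : ℝ) := by
    have h0 : (0:ℝ) < mj := by rw [← hmj]; positivity
    have : 0 < mj := by exact_mod_cast h0
    exact_mod_cast this
  have hδj : (1:ℝ)/r ≤ δ j := by
    rw [div_le_iff₀ hr', mul_comm]
    linarith [hmj ▸ hmj1]
  refine ⟨?_, ?_, ?_⟩
  · intro k
    rcases eq_or_ne k j with rfl | hkj
    · rcases eq_or_ne k i with rfl | hki
      · simp [mv_apply]; positivity
      · simp [mv_apply, hki]
        rw [neg_div]
        linarith [hδj]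
    · rcases eq_or_ne k i with rfl | hki
      · simp [mv_apply, hkj]
        have h1 : (0:ℝ) ≤ ((r:ℝ))⁻¹ := by positivity
        linarith [hpos k]
      · simp [mv_apply, hki, hkj]; exact hpos k
  · have : ∑ k, mv r δ j i k
        = (∑ k, δ k) + ((∑ k, if k = i then (1:ℝ) else 0) - ∑ k, if k = j then (1:ℝ) else 0) / r := by
      simp only [mv_apply]
      rw [Finset.sum_add_distrib, ← Finset.sum_div, Finset.sum_sub_distrib]
    rw [this, hsum]
    simp [Finset.sum_ite_eq']
  · intro k
    obtain ⟨m, hm⟩ := hint k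
    have hexp : (r:ℝ) * mv r δ j i k
        = m + ((if k = i then (1:ℝ) else 0) - (if k = j then 1 else 0)) := by
      rw [mv_apply, mul_add, hm, mul_div_cancel₀ _ hr'.ne']
    rcases eq_or_ne k j with rfl | hkj
    · rcases eq_or_ne k i with rfl | hki
      · exact ⟨m, by rw [hexp]; simp⟩
      · -- m ≥ 1 here since δ k = δ j ≥ 1/r > 0
        have hm1 : 1 ≤ m := by
          have h0 : (0:ℝ) < m := by rw [← hm]; positivity
          exact_mod_cast h0
        refine ⟨m - 1, ?_⟩
        rw [hexp, Nat.cast_sub hm1]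
        rw [if_neg hki, if_pos rfl]
        push_cast
        ring
    · rcases eq_or_ne k i with rfl | hki
      · exact ⟨m + 1, by rw [hexp]; push_cast; simp [hkj]⟩
      · exact ⟨m, by rw [hexp]; simp [hki, hkj]⟩

lemma mv_dist {n r : ℕ} (hr : 0 < r) (δ : EuclideanSpace ℝ (Fin n)) (j i : Fin n) :
    dist (mv r δ j i) δ ≤ Real.sqrt 2 / r := by
  have hr' : (0:ℝ) < r := by exact_mod_cast hr
  rw [EuclideanSpace.dist_eq]
  have hrw : Real.sqrt 2 / r = Real.sqrt (2 / (r:ℝ)^2) := by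
    rw [Real.sqrt_div (by norm_num : (0:ℝ) ≤ 2), Real.sqrt_sq hr'.le]
  rw [hrw]
  apply Real.sqrt_le_sqrt
  calc ∑ k, dist (mv r δ j i k) (δ k) ^ 2
      ≤ ∑ k, ((if k = i then (1:ℝ) else 0) + (if k = j then 1 else 0)) / (r:ℝ)^2 := by
        apply Finset.sum_le_sum
        intro k _
        rw [Real.dist_eq, sq_abs, mv_apply, add_sub_cancel_left, div_pow]
        gcongr
        split_ifs <;> norm_num
    _ = 2 / (r:ℝ)^2 := by
        rw [← Finset.sum_div, Finset.sum_add_distrib]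
        simp [Finset.sum_ite_eq']
        norm_num

lemma mv_inj {n r : ℕ} (hr : 0 < r) (δ : EuclideanSpace ℝ (Fin n)) (j : Fin n) :
    Function.Injective (mv r δ j) := by
  have hr' : (0:ℝ) < r := by exact_mod_cast hr
  intro a b h
  by_contra hne
  have h2 : mv r δ j a a = mv r δ j b a := congrFun (congrArg WithLp.ofLp h) a
  rw [mv_apply, mv_apply, if_pos rfl, if_neg (fun hab => hne hab)] at h2
  have := sub_eq_zero.2 h2
  field_simp at this
  linarith

lemma regGrid_finite (n r : ℕ) (hr : 0 < r) : (regGrid n r).Finite := by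
  have hr' : (0:ℝ) < r := by exact_mod_cast hr
  have hsub : regGrid n r ⊆
      (fun m : Fin n → Fin (r+1) => (WithLp.toLp 2 (fun k => (m k : ℝ) / r) : EuclideanSpace ℝ (Fin n))) ''
        Set.univ := by
    intro δ hδ
    obtain ⟨hpos, hsum, hint⟩ := hδ
    choose m hm using hint
    have hmr : ∀ k, m k < r + 1 := by
      intro k
      have h1 : δ k ≤ 1 := by
        have h2 := Finset.single_le_sum (f := δ) (fun i _ => hpos i) (Finset.mem_univ k)
        rw [hsum] at h2; exact h2
      have h3 : (m k : ℝ) ≤ r := by rw [← hm]; nlinarith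
      have : m k ≤ r := by exact_mod_cast h3
      omega
    refine ⟨fun k => ⟨m k, hmr k⟩, Set.mem_univ _, ?_⟩
    refine PiLp.ext (fun k => ?_)
    show (m k : ℝ) / r = δ k
    rw [div_eq_iff hr'.ne', mul_comm, ← hm]
  exact (Set.finite_univ.image _).subset hsub

theorem stmt9 {n r : ℕ} (hn : 0 < n) (hr : 0 < r) :
    (∀ δ ∈ regGrid n r,
      n ≤ (Metric.closedBall δ (Real.sqrt 2 / r) ∩ regGrid n r).ncard) ∧
    (∀ i : Fin n,
      (Metric.closedBall (EuclideanSpace.single i (1 : ℝ)) (Real.sqrt 2 / r) ∩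
        regGrid n r).ncard = n) := by
  have hr' : (0:ℝ) < r := by exact_mod_cast hr
  -- e_i is in the grid
  have hsingle : ∀ i : Fin n, EuclideanSpace.single i (1:ℝ) ∈ regGrid n r := by
    intro i
    refine ⟨fun k => ?_, ?_, fun k => ?_⟩
    · rw [EuclideanSpace.single_apply]; split_ifs <;> norm_num
    · simp [EuclideanSpace.single_apply, Finset.sum_ite_eq']
    · refine ⟨if k = i then r else 0, ?_⟩
      rw [EuclideanSpace.single_apply]
      split_ifs <;> simp
  have hcard : ∀ (δ : EuclideanSpace ℝ (Fin n)) (j : Fin n),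
      (Set.range (mv r δ j)).ncard = n := by
    intro δ j
    rw [← Nat.card_coe_set_eq, Nat.card_range_of_injective (mv_inj hr δ j)]
    simp
  constructor
  · intro δ hδ
    have hex : ∃ j, 0 < δ j := by
      by_contra h
      push_neg at h
      have h0 : ∑ i, δ i ≤ 0 := Finset.sum_nonpos (fun i _ => h i)
      rw [hδ.2.1] at h0; linarith
    obtain ⟨j, hj⟩ := hex
    have hsub : Set.range (mv r δ j) ⊆
        Metric.closedBall δ (Real.sqrt 2 / r) ∩ regGrid n r := by
      rintro _ ⟨i, rfl⟩
      exact ⟨Metric.mem_closedBall.2 (mv_dist hr δ j i), mv_mem hr hδ hj i⟩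
    have hfin : (Metric.closedBall δ (Real.sqrt 2 / r) ∩ regGrid n r).Finite :=
      (regGrid_finite n r hr).subset (Set.inter_subset_right)
    calc n = (Set.range (mv r δ j)).ncard := (hcard δ j).symm
      _ ≤ _ := Set.ncard_le_ncard hsub hfin
  · intro i
    have hji : (0:ℝ) < EuclideanSpace.single i (1:ℝ) i := by
      rw [EuclideanSpace.single_apply, if_pos rfl]; norm_num
    have hSeq : Metric.closedBall (EuclideanSpace.single i (1:ℝ)) (Real.sqrt 2 / r) ∩
        regGrid n r = Set.range (mv r (EuclideanSpace.single i (1:ℝ)) i) := by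
      apply Set.Subset.antisymm
      · rintro δ ⟨hball, hg⟩
        obtain ⟨hpos, hsum, hint⟩ := hg
        choose m hm using hint
        have hdk : ∀ k, δ k = (m k : ℝ) / r := by
          intro k
          rw [eq_div_iff hr'.ne']
          linarith [hm k]
        have hmsum : ∑ k, m k = r := by
          have hc : ((∑ k, m k : ℕ) : ℝ) = (r:ℝ) := by
            push_cast
            calc (∑ k, (m k : ℝ)) = ∑ k, (r:ℝ) * δ k := by
                  exact Finset.sum_congr rfl (fun k _ => (hm k).symm)
              _ = (r:ℝ) * ∑ k, δ k := by rw [Finset.mul_sum]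
              _ = r := by rw [hsum, mul_one]
          exact_mod_cast hc
        -- distance inequality, squared and scaled by r²
        have hb1 : Real.sqrt (∑ k, dist (δ k) (EuclideanSpace.single i (1:ℝ) k) ^ 2)
            ≤ Real.sqrt 2 / r := by
          rw [← EuclideanSpace.dist_eq]
          exact Metric.mem_closedBall.1 hball
        have hb2 : ∑ k, (δ k - EuclideanSpace.single i (1:ℝ) k) ^ 2 ≤ 2 / (r:ℝ)^2 := by
          have hS0 : (0:ℝ) ≤ ∑ k, dist (δ k) (EuclideanSpace.single i (1:ℝ) k) ^ 2 :=
            Finset.sum_nonneg (fun k _ => sq_nonneg _)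
          have h2 : (∑ k, dist (δ k) (EuclideanSpace.single i (1:ℝ) k) ^ 2)
              ≤ (Real.sqrt 2 / r)^2 := by
            nlinarith [Real.sq_sqrt hS0, Real.sqrt_nonneg
              (∑ k, dist (δ k) (EuclideanSpace.single i (1:ℝ) k) ^ 2)]
          have h3 : (Real.sqrt 2 / (r:ℝ))^2 = 2 / (r:ℝ)^2 := by
            rw [div_pow, Real.sq_sqrt (by norm_num : (0:ℝ) ≤ 2)]
          calc ∑ k, (δ k - EuclideanSpace.single i (1:ℝ) k) ^ 2
              = ∑ k, dist (δ k) (EuclideanSpace.single i (1:ℝ) k) ^ 2 := by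
                exact Finset.sum_congr rfl (fun k _ => by rw [Real.dist_eq, sq_abs])
            _ ≤ 2 / (r:ℝ)^2 := h2.trans (le_of_eq h3)
        have hb3 : ∑ k, ((m k : ℝ) - if k = i then (r:ℝ) else 0) ^ 2 ≤ 2 := by
          have heq : ∑ k, ((m k : ℝ) - if k = i then (r:ℝ) else 0) ^ 2
              = (r:ℝ)^2 * ∑ k, (δ k - EuclideanSpace.single i (1:ℝ) k) ^ 2 := by
            rw [Finset.mul_sum]
            refine Finset.sum_congr rfl (fun k _ => ?_)
            rw [← hm k, EuclideanSpace.single_apply]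
            split_ifs <;> ring
          rw [heq]
          calc (r:ℝ)^2 * ∑ k, (δ k - EuclideanSpace.single i (1:ℝ) k) ^ 2
              ≤ (r:ℝ)^2 * (2 / (r:ℝ)^2) := by
                apply mul_le_mul_of_nonneg_left hb2 (by positivity)
            _ = 2 := by field_simp
        -- split the sum at i
        have hsum_eq : (∑ k, ((m k : ℝ) - if k = i then (r:ℝ) else 0) ^ 2)
            = ((m i : ℝ) - r)^2 + ∑ k ∈ Finset.univ.erase i, ((m k : ℝ))^2 := by
          rw [← Finset.add_sum_erase Finset.univ
            (fun k => ((m k : ℝ) - if k = i then (r:ℝ) else 0) ^ 2) (Finset.mem_univ i)]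
          congr 1
          · simp
          · exact Finset.sum_congr rfl
              (fun k hk => by simp [Finset.ne_of_mem_erase hk])
        have hsplit : ((m i : ℝ) - r)^2 + ∑ k ∈ Finset.univ.erase i, ((m k : ℝ))^2 ≤ 2 := by
          rw [← hsum_eq]; exact hb3
        set t : ℕ := ∑ k ∈ Finset.univ.erase i, m k with ht
        have hmit : m i + t = r := by
          rw [ht, Finset.add_sum_erase Finset.univ m (Finset.mem_univ i)]
          exact hmsum
        have hmi : ((m i : ℝ) - r) = -(t:ℝ) := by
          have : ((m i : ℕ):ℝ) + (t:ℝ) = (r:ℝ) := by exact_mod_cast congrArg (Nat.cast : ℕ → ℝ) hmit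
          linarith
        have ht2 : (t:ℝ)^2 ≤ 2 := by
          have hnn : (0:ℝ) ≤ ∑ k ∈ Finset.univ.erase i, ((m k : ℝ))^2 :=
            Finset.sum_nonneg (fun k _ => sq_nonneg _)
          rw [hmi] at hsplit
          nlinarith
        have ht1 : t ≤ 1 := by
          by_contra hc
          push_neg at hc
          have : (2:ℝ) ≤ (t:ℝ) := by exact_mod_cast hc
          nlinarith
        rcases Nat.le_one_iff_eq_zero_or_eq_one.1 ht1 with ht0 | ht1'
        · -- t = 0: δ = e_i = mv ... i
          have hz : ∀ k ∈ Finset.univ.erase i, m k = 0 :=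
            (Finset.sum_eq_zero_iff).1 ht0
          have hmi' : m i = r := by omega
          refine ⟨i, ?_⟩
          refine PiLp.ext (fun k => ?_)
          rw [mv_apply, hdk k]
          rcases eq_or_ne k i with rfl | hki
          · rw [hmi', EuclideanSpace.single_apply, if_pos rfl]
            field_simp
            ring
          · rw [hz k (Finset.mem_erase.2 ⟨hki, Finset.mem_univ k⟩),
              EuclideanSpace.single_apply, if_neg hki]
            simp
        · -- t = 1: exactly one other coordinate has m = 1
          have hne : ∑ k ∈ Finset.univ.erase i, m k ≠ 0 := by omega
          obtain ⟨k₀, hk₀mem, hk₀⟩ := Finset.exists_ne_zero_of_sum_ne_zero hne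
          have hk₀le : m k₀ ≤ 1 := by
            have := Finset.single_le_sum (f := m) (fun k _ => Nat.zero_le _) hk₀mem
            omega
          have hk₀1 : m k₀ = 1 := by omega
          have hk₀i : k₀ ≠ i := (Finset.mem_erase.1 hk₀mem).1
          have hrest : ∀ k ∈ (Finset.univ.erase i).erase k₀, m k = 0 := by
            have hsplit2 := Finset.add_sum_erase (Finset.univ.erase i) m hk₀mem
            have : ∑ k ∈ (Finset.univ.erase i).erase k₀, m k = 0 := by omega
            exact (Finset.sum_eq_zero_iff).1 this
          have hmi' : m i = r - 1 := by omega
          have hr1 : 1 ≤ r := hr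
          refine ⟨k₀, ?_⟩
          refine PiLp.ext (fun k => ?_)
          rw [mv_apply, hdk k, EuclideanSpace.single_apply]
          rcases eq_or_ne k i with rfl | hki
          · rw [hmi', if_pos rfl, if_neg (fun h => hk₀i h.symm)]
            rw [Nat.cast_sub hr1]
            field_simp
            ring
          · rcases eq_or_ne k k₀ with rfl | hkk
            · rw [hk₀1, if_neg hki, if_pos rfl]
              norm_num
            · rw [hrest k (Finset.mem_erase.2 ⟨hkk,
                Finset.mem_erase.2 ⟨hki, Finset.mem_univ k⟩⟩),
                if_neg hki, if_neg hkk]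
              simp
      · rintro _ ⟨k, rfl⟩
        exact ⟨Metric.mem_closedBall.2 (mv_dist hr _ i k), mv_mem hr (hsingle i) hji k⟩
    rw [hSeq]
    exact hcard _ i
end

section
/- Let C be a real symmetric n×n matrix with ‖C‖_F = 1, let S := {X symmetric n×n : ‖X‖_F ≤ 1}, and define g(X;δ) := −δ^T X δ for δ ∈ Δ^{n-1} and G(X) := max_{δ∈Δ^{n-1}} g(X;δ). Let f* denote the minimum of ⟨C, X⟩ over X ∈ COP^n with ‖X‖_F ≤ 1. Fix ε > 0 and α ≥ 0, and let (X_k) be a sequence of symmetric matrices in S with X_1 = O (the zero matrix) and a sequence (δ_k) in Δ^{n-1} such that for every k: G(X_k) − g(X_k;δ_k) ≤ αε, and if g(X_k;δ_k) ≤ ε then X_{k+1} = P_S(X_k − ε C), while otherwise X_{k+1} = P_S( X_k + (g(X_k;δ_k)/‖δ_k‖_2^4) δ_k δ_k^T ). Then for every positive integer N with N ≥ 1/ε², the set I_N := {k ∈ {1,…,N} : g(X_k;δ_k) ≤ ε} is nonempty, and for every k* ∈ I_N minimizing ⟨C, X_k⟩ over k ∈ I_N one has ⟨C, X_{k*}⟩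 ≤ f* + ε and G(X_{k*}) ≤ (1+α)ε. -/
open Matrix

/-- The trace inner product `⟨A, B⟩ = ∑_{i,j} A_{ij} B_{ij}` on real matrices. -/
def frobIP {n : ℕ} (A B : Matrix (Fin n) (Fin n) ℝ) : ℝ := ∑ i, ∑ j, A i j * B i j

/-- The Frobenius norm. -/
noncomputable def frobNorm {n : ℕ} (A : Matrix (Fin n) (Fin n) ℝ) : ℝ :=
  Real.sqrt (frobIP A A)

/-- The metric projection onto the closed unit Frobenius ball. -/
noncomputable def projFrobBall {n : ℕ} (X : Matrix (Fin n) (Fin n) ℝ) :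
    Matrix (Fin n) (Fin n) ℝ :=
  if frobNorm X ≤ 1 then X else (frobNorm X)⁻¹ • X

namespace Stmt14Aux

variable {n : ℕ}

lemma ip_comm (A B : Matrix (Fin n) (Fin n) ℝ) : frobIP A B = frobIP B A := by
  unfold frobIP
  exact Finset.sum_congr rfl fun i _ => Finset.sum_congr rfl fun j _ => mul_comm _ _

lemma ip_add_left (A B D : Matrix (Fin n) (Fin n) ℝ) :
    frobIP (A + B) D = frobIP A D + frobIP B D := by
  simp [frobIP, Matrix.add_apply, add_mul, Finset.sum_add_distrib]

lemma ip_sub_left (A B D : Matrix (Fin n) (Fin n) ℝ) :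
    frobIP (A - B) D = frobIP A D - frobIP B D := by
  simp [frobIP, Matrix.sub_apply, sub_mul, Finset.sum_sub_distrib]

lemma ip_smul_left (r : ℝ) (A B : Matrix (Fin n) (Fin n) ℝ) :
    frobIP (r • A) B = r * frobIP A B := by
  simp [frobIP, Matrix.smul_apply, smul_eq_mul, Finset.mul_sum, mul_assoc]

lemma ip_add_right (A B D : Matrix (Fin n) (Fin n) ℝ) :
    frobIP D (A + B) = frobIP D A + frobIP D B := by
  rw [ip_comm, ip_add_left, ip_comm A D, ip_comm B D]

lemma ip_sub_right (A B D : Matrix (Fin n) (Fin n) ℝ) :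
    frobIP D (A - B) = frobIP D A - frobIP D B := by
  rw [ip_comm, ip_sub_left, ip_comm A D, ip_comm B D]

lemma ip_smul_right (r : ℝ) (A B : Matrix (Fin n) (Fin n) ℝ) :
    frobIP B (r • A) = r * frobIP B A := by
  rw [ip_comm, ip_smul_left, ip_comm A B]

lemma ip_self_nonneg (A : Matrix (Fin n) (Fin n) ℝ) : 0 ≤ frobIP A A :=
  Finset.sum_nonneg fun i _ => Finset.sum_nonneg fun j _ => mul_self_nonneg _

lemma norm_sq (A : Matrix (Fin n) (Fin n) ℝ) : frobNorm A ^ 2 = frobIP A A :=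
  Real.sq_sqrt (ip_self_nonneg A)

lemma norm_nonneg' (A : Matrix (Fin n) (Fin n) ℝ) : 0 ≤ frobNorm A := Real.sqrt_nonneg _

lemma ip_self_le_one {A : Matrix (Fin n) (Fin n) ℝ} (h : frobNorm A ≤ 1) :
    frobIP A A ≤ 1 := by
  rw [← norm_sq]; nlinarith [norm_nonneg' A]

lemma ip_le (A B : Matrix (Fin n) (Fin n) ℝ) : frobIP A B ≤ frobNorm A * frobNorm B := by
  have hflat : ∀ P Q : Matrix (Fin n) (Fin n) ℝ,
      frobIP P Q = ∑ p : Fin n × Fin n, P p.1 p.2 * Q p.1 p.2 := by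
    intro P Q; rw [frobIP]; exact (Fintype.sum_prod_type' _).symm
  have h := Finset.sum_mul_sq_le_sq_mul_sq Finset.univ
    (fun p : Fin n × Fin n => A p.1 p.2) (fun p : Fin n × Fin n => B p.1 p.2)
  have hAA : frobIP A A = ∑ p : Fin n × Fin n, (A p.1 p.2) ^ 2 := by
    rw [hflat]; exact Finset.sum_congr rfl fun p _ => (sq (A p.1 p.2)).symm
  have hBB : frobIP B B = ∑ p : Fin n × Fin n, (B p.1 p.2) ^ 2 := by
    rw [hflat]; exact Finset.sum_congr rfl fun p _ => (sq (B p.1 p.2)).symm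
  have h2 : frobIP A B ^ 2 ≤ frobIP A A * frobIP B B := by
    rw [hflat, hAA, hBB]; exact h
  calc frobIP A B ≤ |frobIP A B| := le_abs_self _
    _ = Real.sqrt (frobIP A B ^ 2) := (Real.sqrt_sq_eq_abs _).symm
    _ ≤ Real.sqrt (frobIP A A * frobIP B B) := Real.sqrt_le_sqrt h2
    _ = frobNorm A * frobNorm B := by
        rw [Real.sqrt_mul (ip_self_nonneg A), frobNorm, frobNorm]

lemma sub_expand (A B : Matrix (Fin n) (Fin n) ℝ) :
    frobIP (A - B) (A - B) = frobIP A A - 2 * frobIP A B + frobIP B B := by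
  rw [ip_sub_left, ip_sub_right, ip_sub_right, ip_comm B A]; ring

lemma add_expand (A B : Matrix (Fin n) (Fin n) ℝ) :
    frobIP (A + B) (A + B) = frobIP A A + 2 * frobIP A B + frobIP B B := by
  rw [ip_add_left, ip_add_right, ip_add_right, ip_comm B A]; ring

/-- Projection onto the unit ball does not increase distance to points of the ball. -/
lemma proj_contract {W : Matrix (Fin n) (Fin n) ℝ} (hW : frobNorm W ≤ 1)
    (Y : Matrix (Fin n) (Fin n) ℝ) :
    frobIP (projFrobBall Y - W) (projFrobBall Y - W) ≤ frobIP (Y - W) (Y - W) := by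
  by_cases h : frobNorm Y ≤ 1
  · rw [projFrobBall, if_pos h]
  · rw [projFrobBall, if_neg h]
    push_neg at h
    set a := frobNorm Y with ha
    set t := a⁻¹ with ht
    have ha0 : 0 < a := lt_trans one_pos h
    have hta : t * a = 1 := inv_mul_cancel₀ (ne_of_gt ha0)
    have ht1 : t ≤ 1 := by
      rw [ht]; exact inv_le_one_of_one_le₀ (le_of_lt h)
    have ht0 : 0 ≤ t := le_of_lt (inv_pos.mpr ha0)
    have hu : frobIP Y Y = a ^ 2 := (norm_sq Y).symm
    have hv : frobIP Y W ≤ a := by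
      calc frobIP Y W ≤ frobNorm Y * frobNorm W := ip_le Y W
        _ ≤ a * 1 := by
            exact mul_le_mul_of_nonneg_left hW (norm_nonneg' Y)
        _ = a := mul_one a
    rw [sub_expand, sub_expand, ip_smul_left, ip_smul_right, ip_smul_left, hu]
    have h1 : (1 - t) * frobIP Y W ≤ (1 - t) * a :=
      mul_le_mul_of_nonneg_left hv (by linarith)
    nlinarith [sq_nonneg (a - 1)]

end Stmt14Aux

open Stmt14Aux in
theorem stmt14 {n : ℕ} (hn : 0 < n)
    (C : Matrix (Fin n) (Fin n) ℝ) (hCsymm : C.IsSymm) (hCnorm : frobNorm C = 1)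
    (g : Matrix (Fin n) (Fin n) ℝ → (Fin n → ℝ) → ℝ)
    (hg : ∀ X δ, g X δ = -(δ ⬝ᵥ X.mulVec δ))
    (G : Matrix (Fin n) (Fin n) ℝ → ℝ)
    (hG : ∀ X, G X = sSup (g X '' stdSimplex ℝ (Fin n)))
    -- the optimal value f* of min ⟨C, X⟩ over copositive X in the unit Frobenius ball
    (fstar : ℝ)
    (hfstar : IsLeast {v : ℝ | ∃ X : Matrix (Fin n) (Fin n) ℝ, X.IsSymm ∧
        (∀ x : Fin n → ℝ, (∀ i, 0 ≤ x i) → 0 ≤ x ⬝ᵥ X.mulVec x) ∧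
        frobNorm X ≤ 1 ∧ v = frobIP C X} fstar)
    (ε α : ℝ) (hε : 0 < ε) (hα : 0 ≤ α)
    -- the iterates
    (X : ℕ → Matrix (Fin n) (Fin n) ℝ) (δ : ℕ → Fin n → ℝ)
    (hXsymm : ∀ k, 1 ≤ k → (X k).IsSymm)
    (hXS : ∀ k, 1 ≤ k → frobNorm (X k) ≤ 1)
    (hX1 : X 1 = 0)
    (hδ : ∀ k, 1 ≤ k → δ k ∈ stdSimplex ℝ (Fin n))
    (hξ : ∀ k, 1 ≤ k → G (X k) - g (X k) (δ k) ≤ α * ε)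
    (hstep : ∀ k, 1 ≤ k →
      (g (X k) (δ k) ≤ ε → X (k + 1) = projFrobBall (X k - ε • C)) ∧
      (ε < g (X k) (δ k) → X (k + 1) = projFrobBall
        (X k + (g (X k) (δ k) / Real.sqrt (∑ i, δ k i ^ 2) ^ 4) •
          Matrix.vecMulVec (δ k) (δ k))))
    -- the number of iterations
    (N : ℕ) (hN1 : 1 ≤ N) (hN : (N : ℝ) ≥ 1 / ε ^ 2) :
    (∃ k ∈ Finset.Icc 1 N, g (X k) (δ k) ≤ ε) ∧
      ∀ kstar ∈ Finset.Icc 1 N, g (X kstar) (δ kstar) ≤ ε →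
        (∀ k ∈ Finset.Icc 1 N, g (X k) (δ k) ≤ ε → frobIP C (X kstar) ≤ frobIP C (X k)) →
        frobIP C (X kstar) ≤ fstar + ε ∧ G (X kstar) ≤ (1 + α) * ε := by
  obtain ⟨Xs, hXsSymm, hXsCop, hXsNorm, hfeq⟩ := hfstar.1
  -- per-step decrease of the squared distance to the optimum
  have hdrop : ∀ k, 1 ≤ k → (g (X k) (δ k) ≤ ε → fstar + ε < frobIP C (X k)) →
      frobIP (X (k+1) - Xs) (X (k+1) - Xs) < frobIP (X k - Xs) (X k - Xs) - ε^2 := by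
    intro k hk hH
    by_cases hcase : g (X k) (δ k) ≤ ε
    · -- productive step
      have hstep1 := (hstep k hk).1 hcase
      have hC1 : frobIP C C = 1 := by rw [← norm_sq, hCnorm]; norm_num
      have hcK := hH hcase
      rw [hstep1]
      refine lt_of_le_of_lt (proj_contract hXsNorm _) ?_
      have hexp : X k - ε • C - Xs = (X k - Xs) + (-ε) • C := by
        rw [neg_smul]; abel
      rw [hexp, add_expand, ip_smul_right, ip_smul_left, ip_smul_right, hC1]
      have hsplit : frobIP (X k - Xs) C = frobIP C (X k) - fstar := by
        rw [ip_comm, ip_sub_right, hfeq]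
      rw [hsplit]
      nlinarith [hε]
    · -- unproductive step
      push_neg at hcase
      obtain ⟨hd0, hd1⟩ := hδ k hk
      set d := δ k with hdd
      set gk := g (X k) (δ k) with hgk
      set s := ∑ i, d i ^ 2 with hs
      have hgk0 : 0 < gk := lt_trans hε hcase
      have hs0 : 0 < s := by
        have hex : ∃ i, d i ≠ 0 := by
          by_contra hco
          push_neg at hco
          simp [hco] at hd1
        obtain ⟨i, hi⟩ := hex
        have h1 : d i ^ 2 ≤ s :=
          Finset.single_le_sum (f := fun j => d j ^ 2)
            (fun j _ => sq_nonneg _) (Finset.mem_univ i)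
        have h2 : 0 < d i ^ 2 := pow_pos (lt_of_le_of_ne (hd0 i) (Ne.symm hi)) 2
        linarith
      have hs1 : s ≤ 1 := by
        have : s ≤ ∑ i, d i := by
          refine Finset.sum_le_sum fun i _ => ?_
          have hle1 : d i ≤ 1 := by
            have := Finset.single_le_sum (f := fun j => d j) (fun j _ => hd0 j)
              (Finset.mem_univ i)
            linarith [hd1 ▸ this]
          nlinarith [hd0 i]
        linarith [hd1 ▸ this]
      have hsqrt : Real.sqrt s ^ 4 = s ^ 2 := by
        rw [show (4 : ℕ) = 2 * 2 from rfl, pow_mul, Real.sq_sqrt hs0.le]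
      have hstep2 := (hstep k hk).2 hcase
      rw [hsqrt] at hstep2
      set M := Matrix.vecMulVec d d with hM
      set t := gk / s ^ 2 with htdef
      -- inner products with M
      have hipM : ∀ A : Matrix (Fin n) (Fin n) ℝ, frobIP A M = d ⬝ᵥ A.mulVec d := by
        intro A
        rw [frobIP]
        rw [dotProduct]
        refine Finset.sum_congr rfl fun i _ => ?_
        rw [Matrix.mulVec, dotProduct, Finset.mul_sum]
        refine Finset.sum_congr rfl fun j _ => ?_
        rw [hM, Matrix.vecMulVec_apply]
        ring
      have hMM : frobIP M M = s ^ 2 := by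
        rw [frobIP, hs]
        rw [pow_two, Finset.sum_mul_sum]
        refine Finset.sum_congr rfl fun i _ => Finset.sum_congr rfl fun j _ => ?_
        rw [hM, Matrix.vecMulVec_apply]
        ring
      have hq : 0 ≤ d ⬝ᵥ Xs.mulVec d := hXsCop d hd0
      have hIeq : frobIP (X k - Xs) M = -gk - d ⬝ᵥ Xs.mulVec d := by
        rw [ip_sub_left, hipM, hipM, hgk, hg]
        rw [← hdd]
        ring_nf
      have ht0 : 0 < t := div_pos hgk0 (pow_pos hs0 2)
      have hts : t * s ^ 2 = gk := div_mul_cancel₀ _ (pow_ne_zero 2 hs0.ne')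
      have hts2 : t ^ 2 * s ^ 2 = t * gk := by rw [pow_two t, mul_assoc, hts]
      have hsle : s ^ 2 ≤ 1 := by nlinarith
      have hgt : gk ≤ t := by nlinarith [mul_le_mul_of_nonneg_left hsle ht0.le]
      have htgk : ε ^ 2 < t * gk := by
        nlinarith [mul_le_mul_of_nonneg_right hgt hgk0.le,
          mul_lt_mul_of_pos_right hcase hε, mul_lt_mul_of_pos_left hcase hgk0]
      clear_value d gk s M t
      rw [hstep2]
      refine lt_of_le_of_lt (proj_contract hXsNorm _) ?_
      have hexp : X k + t • M - Xs = (X k - Xs) + t • M := by abel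
      rw [hexp, add_expand, ip_smul_right, ip_smul_left, ip_smul_right, hMM, hIeq]
      have e1 : t * (t * s ^ 2) = t * gk := by rw [hts]
      have e2 : t * (-gk - d ⬝ᵥ Xs.mulVec d) = -(t * gk) - t * (d ⬝ᵥ Xs.mulVec d) := by
        ring
      rw [e1, e2]
      linarith [mul_nonneg ht0.le hq, htgk]
  -- main existence claim
  have main : ∃ k ∈ Finset.Icc 1 N, g (X k) (δ k) ≤ ε ∧ frobIP C (X k) ≤ fstar + ε := by
    by_contra hco
    push_neg at hco
    have hiter : ∀ m, 1 ≤ m → m ≤ N →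
        frobIP (X (m+1) - Xs) (X (m+1) - Xs) <
          frobIP (X 1 - Xs) (X 1 - Xs) - m * ε ^ 2 := by
      intro m hm1 hmN
      induction m with
      | zero => omega
      | succ m ih =>
        by_cases hm0 : m = 0
        · subst hm0
          have := hdrop 1 le_rfl (hco 1 (Finset.mem_Icc.mpr ⟨le_rfl, hN1⟩))
          push_cast
          linarith
        · have hm1' : 1 ≤ m := Nat.one_le_iff_ne_zero.mpr hm0
          have ihm := ih hm1' (le_trans (Nat.le_succ m) hmN)
          have hmem : m + 1 ∈ Finset.Icc 1 N := Finset.mem_Icc.mpr ⟨by omega, hmN⟩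
          have hd := hdrop (m+1) (by omega) (hco (m+1) hmem)
          push_cast at ihm ⊢
          linarith
    have h1 : frobIP (X 1 - Xs) (X 1 - Xs) ≤ 1 := by
      rw [hX1, zero_sub]
      have : frobIP (-Xs) (-Xs) = frobIP Xs Xs := by
        simp [frobIP, Matrix.neg_apply]
      rw [this]
      exact ip_self_le_one hXsNorm
    have hNe : 1 ≤ (N : ℝ) * ε ^ 2 := by
      rw [ge_iff_le, div_le_iff₀ (pow_pos hε 2)] at hN
      linarith
    have hfin := hiter N hN1 le_rfl
    have hnn := ip_self_nonneg (X (N+1) - Xs)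
    linarith
  obtain ⟨k, hkmem, hkg, hkC⟩ := main
  refine ⟨⟨k, hkmem, hkg⟩, ?_⟩
  intro kstar hksmem hgks hmin
  obtain ⟨hks1, hksN⟩ := Finset.mem_Icc.mp hksmem
  constructor
  · exact le_trans (hmin k hkmem hkg) hkC
  · have hξk := hξ kstar hks1
    nlinarith
end

section
/- Let C be a real symmetric n×n matrix with ‖C‖_F = 1, let S := {X symmetric n×n : ‖X‖_F ≤ 1}, and define g(X;δ) := −δ^T X δ for δ ∈ Δ^{n-1} and G(X) := max_{δ∈Δ^{n-1}} g(X;δ). Fix ε > 0 and α ≥ 0, and let (X_k) be a sequence of symmetric matrices in S with X_1 = O (the zero matrix) and a sequence (δ_k) in Δ^{n-1} such that for every k: G(X_k) − g(X_k;δ_k) ≤ αε, and if g(X_k;δ_k) ≤ ε then X_{k+1} = P_S(X_k − ε C), while otherwise X_{k+1} = P_S( X_k + (g(X_k;δ_k)/‖δ_k‖_2^4) δ_k δ_k^T ). Let N be a positive integer with N ≥ 1/ε², let I_N := {k ∈ {1,…,N} : g(X_k;δ_k) ≤ ε}, and let k* ∈ I_N minimize ⟨C, X_k⟩ over k ∈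 I_N. If ⟨C, X_{k*}⟩ < −n(1+α)ε, then C is not completely positive. -/
open Matrix

/-- A real symmetric matrix is completely positive if it is a finite sum of
rank-one matrices `a aᵀ` with `a` entrywise nonnegative. -/
def IsCompletelyPositive {n : ℕ} (C : Matrix (Fin n) (Fin n) ℝ) : Prop :=
  ∃ (k : ℕ) (a : Fin k → Fin n → ℝ), (∀ i j, 0 ≤ a i j) ∧
    C = ∑ i, Matrix.vecMulVec (a i) (a i)

theorem stmt15 {n : ℕ} (hn : 0 < n)
    (C : Matrix (Fin n) (Fin n) ℝ) (hCsymm : C.IsSymm) (hCnorm : frobNorm C = 1)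
    (g : Matrix (Fin n) (Fin n) ℝ → (Fin n → ℝ) → ℝ)
    (hg : ∀ X δ, g X δ = -(δ ⬝ᵥ X.mulVec δ))
    (G : Matrix (Fin n) (Fin n) ℝ → ℝ)
    (hG : ∀ X, G X = sSup (g X '' stdSimplex ℝ (Fin n)))
    (ε α : ℝ) (hε : 0 < ε) (hα : 0 ≤ α)
    -- the iterates
    (X : ℕ → Matrix (Fin n) (Fin n) ℝ) (δ : ℕ → Fin n → ℝ)
    (hXsymm : ∀ k, 1 ≤ k → (X k).IsSymm)
    (hXS : ∀ k, 1 ≤ k → frobNorm (X k) ≤ 1)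
    (hX1 : X 1 = 0)
    (hδ : ∀ k, 1 ≤ k → δ k ∈ stdSimplex ℝ (Fin n))
    (hξ : ∀ k, 1 ≤ k → G (X k) - g (X k) (δ k) ≤ α * ε)
    (hstep : ∀ k, 1 ≤ k →
      (g (X k) (δ k) ≤ ε → X (k + 1) = projFrobBall (X k - ε • C)) ∧
      (ε < g (X k) (δ k) → X (k + 1) = projFrobBall
        (X k + (g (X k) (δ k) / Real.sqrt (∑ i, δ k i ^ 2) ^ 4) •
          Matrix.vecMulVec (δ k) (δ k))))
    -- the number of iterations and the output index k*
    (N : ℕ) (hN1 : 1 ≤ N) (hN : (N : ℝ) ≥ 1 / ε ^ 2)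
    (kstar : ℕ) (hk1 : kstar ∈ Finset.Icc 1 N) (hk2 : g (X kstar) (δ kstar) ≤ ε)
    (hkmin : ∀ k ∈ Finset.Icc 1 N, g (X k) (δ k) ≤ ε →
      frobIP C (X kstar) ≤ frobIP C (X k))
    (hneg : frobIP C (X kstar) < -((n : ℝ) * (1 + α) * ε)) :
    ¬ IsCompletelyPositive C := by
  rintro ⟨k, a, ha, hC⟩
  obtain ⟨hk1', -⟩ := Finset.mem_Icc.mp hk1
  set Y := X kstar with hY
  have swap1 : ∀ (f : Fin n → Fin n → Fin k → ℝ),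
      ∑ p, ∑ q, ∑ i, f p q i = ∑ i, ∑ p, ∑ q, f p q i := by
    intro f
    calc ∑ p, ∑ q, ∑ i, f p q i
        = ∑ p, ∑ i, ∑ q, f p q i :=
          Finset.sum_congr rfl fun p _ => Finset.sum_comm
      _ = ∑ i, ∑ p, ∑ q, f p q i := Finset.sum_comm
  -- continuity of g Y and boundedness above on the simplex
  have hcont : Continuous fun d : Fin n → ℝ => g Y d := by
    simp only [hg, Matrix.mulVec, dotProduct]
    refine Continuous.neg ?_
    refine continuous_finset_sum _ fun i _ => ?_
    exact (continuous_apply i).mul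
      (continuous_finset_sum _ fun j _ => continuous_const.mul (continuous_apply j))
  have hbdd : BddAbove (g Y '' stdSimplex ℝ (Fin n)) :=
    ((isCompact_stdSimplex ℝ (Fin n)).image hcont).bddAbove
  have hGle : G Y ≤ (1 + α) * ε := by
    have h := hξ kstar hk1'
    rw [← hY] at h
    nlinarith [hk2]
  have hkey : ∀ d ∈ stdSimplex ℝ (Fin n), -(d ⬝ᵥ Y.mulVec d) ≤ (1 + α) * ε := by
    intro d hd
    have h1 : g Y d ≤ G Y := by
      rw [hG]
      exact le_csSup hbdd ⟨d, hd, rfl⟩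
    rw [hg] at h1
    linarith
  -- per-term bound
  have hterm : ∀ i : Fin k,
      -((a i) ⬝ᵥ Y.mulVec (a i)) ≤ (∑ j, a i j) ^ 2 * ((1 + α) * ε) := by
    intro i
    set s := ∑ j, a i j with hs
    have hs0 : 0 ≤ s := Finset.sum_nonneg fun j _ => ha i j
    rcases eq_or_lt_of_le hs0 with hz | hp
    · have hzero : a i = 0 := by
        funext j
        exact (Finset.sum_eq_zero_iff_of_nonneg (fun j _ => ha i j)).mp hz.symm j
          (Finset.mem_univ j)
      simp only [hzero]
      simp only [zero_dotProduct, neg_zero]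
      exact mul_nonneg (sq_nonneg s) (mul_nonneg (by linarith) hε.le)
    · have hd : s⁻¹ • a i ∈ stdSimplex ℝ (Fin n) := by
        constructor
        · intro j
          exact mul_nonneg (inv_nonneg.mpr hs0) (ha i j)
        · simp only [Pi.smul_apply, smul_eq_mul, ← Finset.mul_sum, ← hs]
          exact inv_mul_cancel₀ hp.ne'
      have h2 := hkey _ hd
      have h3 : (s⁻¹ • a i) ⬝ᵥ Y.mulVec (s⁻¹ • a i)
          = s⁻¹ * (s⁻¹ * ((a i) ⬝ᵥ Y.mulVec (a i))) := by
        rw [smul_dotProduct, Matrix.mulVec_smul, dotProduct_smul]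
        simp [smul_eq_mul]
      rw [h3] at h2
      have h4 := mul_le_mul_of_nonneg_left h2 (mul_pos hp hp).le
      have h5 : s * s * -(s⁻¹ * (s⁻¹ * ((a i) ⬝ᵥ Y.mulVec (a i))))
          = -((a i) ⬝ᵥ Y.mulVec (a i)) := by
        field_simp
      rw [h5] at h4
      nlinarith [h4]
  -- express frobIP C Y as a sum of quadratic forms
  have hsum : frobIP C Y = ∑ i, (a i) ⬝ᵥ Y.mulVec (a i) := by
    have lhs_eq : frobIP C Y = ∑ i, ∑ p, ∑ q, a i p * a i q * Y p q := by
      simp only [frobIP, hC, Matrix.sum_apply, Matrix.vecMulVec_apply, Finset.sum_mul]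
      exact swap1 _
    have rhs_eq : ∀ i : Fin k,
        (a i) ⬝ᵥ Y.mulVec (a i) = ∑ p, ∑ q, a i p * a i q * Y p q := by
      intro i
      simp only [dotProduct, Matrix.mulVec, Finset.mul_sum]
      exact Finset.sum_congr rfl fun p _ => Finset.sum_congr rfl fun q _ => by ring
    rw [lhs_eq]
    exact Finset.sum_congr rfl fun i _ => (rhs_eq i).symm
  -- lower bound on frobIP C Y
  have hlow : -((∑ i, (∑ j, a i j) ^ 2) * ((1 + α) * ε)) ≤ frobIP C Y := by
    rw [hsum]
    have h := Finset.sum_le_sum (fun i (_ : i ∈ Finset.univ) => hterm i)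
    rw [Finset.sum_neg_distrib, ← Finset.sum_mul] at h
    linarith
  -- the total mass bound
  have h0 : (0:ℝ) ≤ frobIP C C :=
    Finset.sum_nonneg fun p _ => Finset.sum_nonneg fun q _ => mul_self_nonneg _
  have hCC : frobIP C C = 1 := by
    have h := hCnorm
    rw [frobNorm] at h
    nlinarith [Real.sq_sqrt h0]
  have heq : (∑ i, (∑ j, a i j) ^ 2) = ∑ p, ∑ q, C p q := by
    have e1 : ∀ i : Fin k, (∑ j, a i j) ^ 2 = ∑ p, ∑ q, a i p * a i q := by
      intro i
      rw [sq, Finset.sum_mul_sum]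
    calc (∑ i, (∑ j, a i j) ^ 2) = ∑ i, ∑ p, ∑ q, a i p * a i q :=
          Finset.sum_congr rfl fun i _ => e1 i
      _ = ∑ p, ∑ q, ∑ i, a i p * a i q := (swap1 _).symm
      _ = ∑ p, ∑ q, C p q := by
          simp only [hC, Matrix.sum_apply, Matrix.vecMulVec_apply]
  have hcs : (∑ p, ∑ q, C p q) ^ 2 ≤ (n : ℝ) ^ 2 := by
    have h := Finset.sum_mul_sq_le_sq_mul_sq (Finset.univ : Finset (Fin n × Fin n))
      (fun x => C x.1 x.2) (fun _ => 1)
    simp only [mul_one, one_pow] at h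
    have e1 : (∑ x : Fin n × Fin n, C x.1 x.2) = ∑ p, ∑ q, C p q :=
      Fintype.sum_prod_type _
    have e2 : (∑ x : Fin n × Fin n, C x.1 x.2 ^ 2) = frobIP C C := by
      rw [frobIP, Fintype.sum_prod_type]
      exact Finset.sum_congr rfl fun p _ => Finset.sum_congr rfl fun q _ => sq (C p q) ▸ by ring
    rw [e1, e2, hCC] at h
    have e3 : (∑ _x : Fin n × Fin n, (1:ℝ)) = (n:ℝ) ^ 2 := by
      simp [Finset.card_univ, sq]
    rw [e3] at h
    linarith
  have hssum : (∑ i, (∑ j, a i j) ^ 2) ≤ (n : ℝ) := by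
    rw [heq]
    nlinarith [Nat.cast_nonneg (α := ℝ) n]
  have hB : (0:ℝ) ≤ (1 + α) * ε := mul_nonneg (by linarith) hε.le
  nlinarith [mul_le_mul_of_nonneg_right hssum hB]
end

section
/- Let n be a positive integer, α ≥ 0, ε > 0, and let C and X be real symmetric n×n matrices with ‖C‖_F = 1. If max_{δ ∈ Δ^{n-1}} (−δ^T X δ) ≤ (1+α)ε and ⟨C, X⟩ < −n(1+α)ε, then C is not completely positive. -/
open Matrix

lemma sum_rot {m k : ℕ} {β : Type*} [AddCommMonoid β] (f : Fin m → Fin m → Fin k → β) :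
    ∑ p, ∑ q, ∑ i, f p q i = ∑ i, ∑ p, ∑ q, f p q i :=
  (Finset.sum_congr rfl fun p _ => Finset.sum_comm).trans Finset.sum_comm

theorem stmt16 {n : ℕ} (hn : 0 < n) (α ε : ℝ) (hα : 0 ≤ α) (hε : 0 < ε)
    (C X : Matrix (Fin n) (Fin n) ℝ) (hCsymm : C.IsSymm) (hXsymm : X.IsSymm)
    (hCnorm : Real.sqrt (∑ i, ∑ j, C i j * C i j) = 1)
    (hmax : sSup ((fun δ : Fin n → ℝ => -(δ ⬝ᵥ X.mulVec δ)) '' stdSimplex ℝ (Fin n)) ≤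
      (1 + α) * ε)
    (hip : ∑ i, ∑ j, C i j * X i j < -((n : ℝ) * (1 + α) * ε)) :
    ¬ IsCompletelyPositive C := by
  rintro ⟨k, a, ha, hC⟩
  have hεα : 0 ≤ (1 + α) * ε := by positivity
  -- the image set is bounded above
  have hcont : Continuous (fun δ : Fin n → ℝ => -(δ ⬝ᵥ X.mulVec δ)) := by
    simp only [dotProduct, Matrix.mulVec]
    continuity
  have hbdd : BddAbove ((fun δ : Fin n → ℝ => -(δ ⬝ᵥ X.mulVec δ)) '' stdSimplex ℝ (Fin n)) :=
    ((isCompact_stdSimplex ℝ (Fin n)).image hcont).bddAbove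
  -- key bound for each rank-one piece
  have key : ∀ i : Fin k, -((1 + α) * ε) * (∑ j, a i j) ^ 2 ≤ a i ⬝ᵥ X.mulVec (a i) := by
    intro i
    set s : ℝ := ∑ j, a i j with hs
    have hs0 : 0 ≤ s := Finset.sum_nonneg fun j _ => ha i j
    rcases eq_or_lt_of_le hs0 with h0 | hpos
    · have hz : ∀ j, a i j = 0 := by
        intro j
        have := (Finset.sum_eq_zero_iff_of_nonneg (fun j _ => ha i j)).1 h0.symm
        exact this j (Finset.mem_univ j)
      have : a i = 0 := funext hz
      simp [this, ← h0]
    · set δ : Fin n → ℝ := s⁻¹ • a i with hδ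
      have hδmem : δ ∈ stdSimplex ℝ (Fin n) := by
        constructor
        · intro j
          exact mul_nonneg (inv_nonneg.2 hs0) (ha i j)
        · simp only [hδ, Pi.smul_apply, smul_eq_mul, ← Finset.mul_sum]
          exact inv_mul_cancel₀ (ne_of_gt hpos)
      have hle : -(δ ⬝ᵥ X.mulVec δ) ≤ (1 + α) * ε :=
        le_trans (le_csSup hbdd ⟨δ, hδmem, rfl⟩) hmax
      have hquad : δ ⬝ᵥ X.mulVec δ = s⁻¹ * s⁻¹ * (a i ⬝ᵥ X.mulVec (a i)) := by
        simp [hδ, Matrix.mulVec_smul, smul_dotProduct, dotProduct_smul, smul_eq_mul]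
        ring
      rw [hquad] at hle
      have h2 : -((1 + α) * ε) ≤ s⁻¹ * s⁻¹ * (a i ⬝ᵥ X.mulVec (a i)) := by linarith
      have := mul_le_mul_of_nonneg_left h2 (le_of_lt (mul_pos hpos hpos))
      calc -((1 + α) * ε) * s ^ 2 = (s * s) * -((1 + α) * ε) := by ring
        _ ≤ (s * s) * (s⁻¹ * s⁻¹ * (a i ⬝ᵥ X.mulVec (a i))) := this
        _ = a i ⬝ᵥ X.mulVec (a i) := by
            field_simp
  -- ⟨C,X⟩ = ∑ i quadratic forms
  have hCX : ∑ p, ∑ q, C p q * X p q = ∑ i, a i ⬝ᵥ X.mulVec (a i) := by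
    subst hC
    simp only [Matrix.sum_apply, Matrix.vecMulVec_apply, Finset.sum_mul, dotProduct,
      Matrix.mulVec, Finset.mul_sum]
    rw [sum_rot]
    exact Finset.sum_congr rfl fun i _ => Finset.sum_congr rfl fun p _ =>
      Finset.sum_congr rfl fun q _ => by ring
  -- sum of squares of entries is 1
  have hsq : ∑ p, ∑ q, C p q * C p q = 1 := by
    have hnn : 0 ≤ ∑ p, ∑ q, C p q * C p q :=
      Finset.sum_nonneg fun p _ => Finset.sum_nonneg fun q _ => mul_self_nonneg _
    have := Real.sq_sqrt hnn
    rw [hCnorm] at this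
    simpa using this.symm
  -- sum of entries of C equals ∑ i s_i^2
  have hsum : ∑ p, ∑ q, C p q = ∑ i, (∑ j, a i j) ^ 2 := by
    subst hC
    simp only [Matrix.sum_apply, Matrix.vecMulVec_apply]
    rw [sum_rot]
    refine Finset.sum_congr rfl fun i _ => ?_
    rw [sq, Finset.sum_mul_sum]
  -- sum of entries of C is at most n (Cauchy–Schwarz)
  have hsumle : ∑ p, ∑ q, C p q ≤ (n : ℝ) := by
    have h := Finset.sum_mul_sq_le_sq_mul_sq Finset.univ
      (fun pq : Fin n × Fin n => C pq.1 pq.2) (fun _ => (1 : ℝ))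
    simp only [mul_one, one_pow] at h
    have e1 : ∑ pq : Fin n × Fin n, C pq.1 pq.2 = ∑ p, ∑ q, C p q := by
      exact Fintype.sum_prod_type _
    have e2 : ∑ pq : Fin n × Fin n, C pq.1 pq.2 ^ 2 = 1 := by
      rw [← Finset.univ_product_univ, Finset.sum_product]
      simpa [sq] using hsq
    have e3 : ∑ _pq : Fin n × Fin n, (1 : ℝ) = (n : ℝ) ^ 2 := by
      simp [sq]
    rw [e1, e2, e3, one_mul] at h
    have hn0 : (0 : ℝ) ≤ n := Nat.cast_nonneg n
    nlinarith [sq_nonneg (∑ p, ∑ q, C p q - (n : ℝ)), sq_nonneg (∑ p, ∑ q, C p q + (n : ℝ))]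
  -- combine
  have hlow : -((n : ℝ) * (1 + α) * ε) ≤ ∑ p, ∑ q, C p q * X p q := by
    rw [hCX]
    calc -((n : ℝ) * (1 + α) * ε) = -((1 + α) * ε) * n := by ring
      _ ≤ -((1 + α) * ε) * (∑ p, ∑ q, C p q) := by
          apply mul_le_mul_of_nonpos_left hsumle
          linarith
      _ = ∑ i, -((1 + α) * ε) * (∑ j, a i j) ^ 2 := by
          rw [hsum, Finset.mul_sum]
      _ ≤ ∑ i, a i ⬝ᵥ X.mulVec (a i) := Finset.sum_le_sum fun i _ => key i
  linarith
end
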